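/- arXiv:2509.23394 — 2 statements merged into one kernel-verified Lean document; each statement's English description precedes it below -/
import Mathlib

section
/- Let B be a bidirected graph rooted at r, and let a(B) be its auxiliary graph. Then the map g_B, which contracts all auxiliary edges, is a bijection from the set of proper r-paths of a(B) to the set of r-paths of B. -/
/-- A bidirected graph: a loopless multigraph together with a signing of each
half-edge (edge-endpoint incidence) by a sign (`true` = `+`, `false` = `-`). -/
structure BidirGraph (V : Type) (E : Type) where
  ends : E → V × V
  sign : E → V → Bool
  loopless : ∀ e : E, (ends e).1 ≠ (ends e).2

namespace BidirGraph

variable {V E : Type}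

/-- The head of an oriented edge `(e, b)`: `b = true` orients `e` from its first
endpoint to its second endpoint. -/
def ohead (B : BidirGraph V E) (oe : E × Bool) : V :=
  if oe.2 then (B.ends oe.1).2 else (B.ends oe.1).1

/-- The tail of an oriented edge. -/
def otail (B : BidirGraph V E) (oe : E × Bool) : V :=
  if oe.2 then (B.ends oe.1).1 else (B.ends oe.1).2

/-- `e` is incident with `v`. -/
def Incident (B : BidirGraph V E) (e : E) (v : V) : Prop :=
  (B.ends e).1 = v ∨ (B.ends e).2 = v

/-- `L` is a trail starting at `v`: a sequence of oriented edges, with no repeated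
underlying edge, consecutive edges sharing a vertex at which they have opposite signs. -/
def IsTrailFrom (B : BidirGraph V E) (v : V) (L : List (E × Bool)) : Prop :=
  (L.map Prod.fst).Nodup ∧
  (∀ oe ∈ L.head?, B.otail oe = v) ∧
  L.Chain' (fun a b => B.ohead a = B.otail b ∧ B.sign a.1 (B.ohead a) ≠ B.sign b.1 (B.ohead a))

/-- The final vertex of a trail starting at `v`. -/
def trailEnd (B : BidirGraph V E) (v : V) (L : List (E × Bool)) : V :=
  match L.getLast? with
  | none => v
  | some oe => B.ohead oe

/-- The internal vertices of a trail: the heads of all edges except the last one. -/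
def Internal (B : BidirGraph V E) (L : List (E × Bool)) : List V :=
  (L.map B.ohead).dropLast

/-- An `r`-trail: a trail starting at `r` with no internal vertex equal to `r`. -/
def IsRTrail (B : BidirGraph V E) (r : V) (L : List (E × Bool)) : Prop :=
  B.IsTrailFrom r L ∧ ∀ v ∈ B.Internal L, v ≠ r

/-- The trail `L` ends at vertex `w` with sign `α`. -/
def EndsAtSigned (B : BidirGraph V E) (L : List (E × Bool)) (w : V) (α : Bool) : Prop :=
  ∃ oe, L.getLast? = some oe ∧ B.ohead oe = w ∧ B.sign oe.1 w = α

/-- A path: a trail with no repeated vertex. -/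
def IsPathFrom (B : BidirGraph V E) (v : V) (L : List (E × Bool)) : Prop :=
  B.IsTrailFrom v L ∧ (v :: L.map B.ohead).Nodup

/-- An almost path: a trail that is trivial or becomes a path after removing its last edge. -/
def IsAlmostPathFrom (B : BidirGraph V E) (v : V) (L : List (E × Bool)) : Prop :=
  B.IsTrailFrom v L ∧ (v :: B.Internal L).Nodup

/-- An edge is trail-undirectable if there are `r`-trails ending in both of its orientations. -/
def TrailUndirectable (B : BidirGraph V E) (r : V) (e : E) : Prop :=
  (∃ L, B.IsRTrail r L ∧ L.getLast? = some (e, true)) ∧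
  (∃ L, B.IsRTrail r L ∧ L.getLast? = some (e, false))

/-- `(e, b)` is the natural orientation of the trail-directable edge `e`: `r`-trails end
in the orientation `(e, b)` but not in the opposite orientation. -/
def NatOrient (B : BidirGraph V E) (r : V) (e : E) (b : Bool) : Prop :=
  (∃ L, B.IsRTrail r L ∧ L.getLast? = some (e, b)) ∧
  ¬ ∃ L, B.IsRTrail r L ∧ L.getLast? = some (e, !b)

/-- An edge is trail-directable if exactly one of its orientations is the final oriented
edge of some `r`-trail. -/
def TrailDirectable (B : BidirGraph V E) (r : V) (e : E) : Prop :=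
  ∃ b, B.NatOrient r e b

/-- `B` is trail-reachable: every edge is the final edge of some `r`-trail. -/
def TrailReachable (B : BidirGraph V E) (r : V) : Prop :=
  ∀ e : E, ∃ L b, B.IsRTrail r L ∧ L.getLast? = some (e, b)

/-- Adjacency of trail-undirectable edges: both undirectable and sharing an endpoint. -/
def UStep (B : BidirGraph V E) (r : V) (a b : E) : Prop :=
  B.TrailUndirectable r a ∧ B.TrailUndirectable r b ∧ ∃ v, B.Incident a v ∧ B.Incident b v

/-- `C` is (the edge set of) a nontrivial trail-undirectable component of `B`: the set of
trail-undirectable edges connected to some trail-undirectable edge `e` inside the subgraph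
induced by the trail-undirectable edges. -/
def IsUComp (B : BidirGraph V E) (r : V) (C : Set E) : Prop :=
  ∃ e, B.TrailUndirectable r e ∧ C = {f | Relation.ReflTransGen (B.UStep r) e f}

/-- `v` is a vertex of the edge set `C` (i.e. an endpoint of one of its edges). -/
def VC (B : BidirGraph V E) (C : Set E) (v : V) : Prop :=
  ∃ e ∈ C, B.Incident e v

/-- `B` is edge-clean: the root lies in no nontrivial trail-undirectable component. -/
def EdgeClean (B : BidirGraph V E) (r : V) : Prop :=
  ¬ ∃ C : Set E, B.IsUComp r C ∧ B.VC C r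

/-- `B` is clean: there is no nontrivial almost path starting and ending at `r`. -/
def Clean (B : BidirGraph V E) (r : V) : Prop :=
  ¬ ∃ L, L ≠ ([] : List (E × Bool)) ∧ B.IsAlmostPathFrom r L ∧ B.trailEnd r L = r

/-- A vertex is trail-solid if it is the root, or the head of the natural orientation of a
trail-directable edge, or incident with no trail-undirectable edge. -/
def TrailSolid (B : BidirGraph V E) (r v : V) : Prop :=
  v = r ∨ (∃ e b, B.NatOrient r e b ∧ B.ohead (e, b) = v) ∨
    (∀ e : E, B.Incident e v → ¬ B.TrailUndirectable r e)

/-- Two trails are edge-disjoint if no underlying edge occurs in both. -/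
def EdgeDisj (L₁ L₂ : List (E × Bool)) : Prop :=
  ∀ (e : E) (b₁ b₂ : Bool), (e, b₁) ∈ L₁ → (e, b₂) ∈ L₂ → False

/-- Two paths are internally vertex-disjoint if they share no internal vertex. -/
def IntDisj (B : BidirGraph V E) (L₁ L₂ : List (E × Bool)) : Prop :=
  ∀ w : V, w ∈ B.Internal L₁ → w ∈ B.Internal L₂ → False

end BidirGraph

namespace BidirGraph

variable {V E : Type}

/-- A vertex `v ≠ r` is plain if for some sign `α` no `r`-path of `B` ends at `v` with
sign `α`. -/
def Plain (B : BidirGraph V E) (r v : V) : Prop :=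
  v ≠ r ∧ ∃ α : Bool, ¬ ∃ L, B.IsPathFrom r L ∧ B.EndsAtSigned L v α

/-- Vertices of the auxiliary graph: non-plain vertices, plus two copies `v^-` (`false`)
and `v^+` (`true`) of each plain vertex `v`. -/
def AuxV (B : BidirGraph V E) (r : V) : Type :=
  {v : V // ¬ B.Plain r v} ⊕ ({v : V // B.Plain r v} × Bool)

/-- Edges of the auxiliary graph: the original edges plus one auxiliary edge per plain
vertex. -/
def AuxE (B : BidirGraph V E) (r : V) : Type :=
  E ⊕ {v : V // B.Plain r v}

open Classical in
/-- The endpoint of an original edge `e` at a vertex `u` of `B`, viewed in the auxiliary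
graph: a plain vertex `u` is replaced by the copy `u^{sign of e at u}`. -/
noncomputable def mapVtx (B : BidirGraph V E) (r : V) (e : E) (u : V) : B.AuxV r :=
  if h : B.Plain r u then Sum.inr (⟨u, h⟩, B.sign e u) else Sum.inl ⟨u, h⟩

/-- The auxiliary graph `a(B)`: each plain vertex `v` is split into `v^+` and `v^-`,
joined by an auxiliary edge with sign `+` at `v^-` and `-` at `v^+`; edges of `B` at a
plain vertex `v` with sign `s` are reattached to `v^s` with the same sign. -/
noncomputable def auxGraph (B : BidirGraph V E) (r : V) : BidirGraph (B.AuxV r) (B.AuxE r) where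
  ends := fun e => match e with
    | Sum.inl e0 => (B.mapVtx r e0 (B.ends e0).1, B.mapVtx r e0 (B.ends e0).2)
    | Sum.inr v => (Sum.inr (v, true), Sum.inr (v, false))
  sign := fun e w => match e, w with
    | Sum.inl e0, Sum.inl u => B.sign e0 u.1
    | Sum.inl _, Sum.inr w => w.2
    | Sum.inr _, Sum.inl _ => true
    | Sum.inr _, Sum.inr w => !w.2
  loopless := by
    intro e
    match e with
    | Sum.inl e0 =>
      have h := B.loopless e0
      simp only [mapVtx]
      by_cases h1 : B.Plain r (B.ends e0).1 <;> by_cases h2 : B.Plain r (B.ends e0).2 <;>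
        simp_all [AuxV]
    | Sum.inr v => simp [AuxV]

/-- The root `r` of `B`, viewed in the auxiliary graph (the root is never plain). -/
def auxRoot (B : BidirGraph V E) (r : V) : B.AuxV r :=
  Sum.inl ⟨r, fun h => h.1 rfl⟩

/-- The map `g_B`: contract all auxiliary edges of a walk in `a(B)`, obtaining a walk
in `B`. -/
def contractAux (B : BidirGraph V E) (r : V) (L : List (B.AuxE r × Bool)) :
    List (E × Bool) :=
  L.filterMap (fun oe => match oe.1 with
    | Sum.inl e0 => some (e0, oe.2)
    | Sum.inr _ => none)

/-- A walk of `a(B)` is proper if its last edge is not an auxiliary edge. -/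
def ProperLast (B : BidirGraph V E) (r : V) (L : List (B.AuxE r × Bool)) : Prop :=
  ∀ oe ∈ L.getLast?, ∃ e0 : E, oe.1 = Sum.inl e0

end BidirGraph

namespace BidirGraph

variable {V E : Type}

attribute [reducible] AuxV AuxE

def chainRel (B : BidirGraph V E) : (E × Bool) → (E × Bool) → Prop :=
  fun a b => B.ohead a = B.otail b ∧ B.sign a.1 (B.ohead a) ≠ B.sign b.1 (B.ohead a)

theorem isTrailFrom_def (B : BidirGraph V E) (v : V) (L : List (E × Bool)) :
    B.IsTrailFrom v L ↔
      (L.map Prod.fst).Nodup ∧ (∀ oe ∈ L.head?, B.otail oe = v) ∧ L.Chain' B.chainRel :=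
  Iff.rfl

def projV (B : BidirGraph V E) (r : V) : B.AuxV r → V
  | Sum.inl u => u.1
  | Sum.inr w => w.1.1

@[simp] theorem projV_mapVtx (B : BidirGraph V E) (r : V) (e : E) (u : V) :
    B.projV r (B.mapVtx r e u) = u := by
  unfold mapVtx; split <;> rfl

@[simp] theorem projV_auxRoot (B : BidirGraph V E) (r : V) :
    B.projV r (B.auxRoot r) = r := rfl

@[simp] theorem aux_ohead_inl (B : BidirGraph V E) (r : V) (e : E) (b : Bool) :
    (B.auxGraph r).ohead (Sum.inl e, b) = B.mapVtx r e (B.ohead (e, b)) := by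
  cases b <;> rfl

@[simp] theorem aux_otail_inl (B : BidirGraph V E) (r : V) (e : E) (b : Bool) :
    (B.auxGraph r).otail (Sum.inl e, b) = B.mapVtx r e (B.otail (e, b)) := by
  cases b <;> rfl

@[simp] theorem aux_ohead_inr (B : BidirGraph V E) (r : V) (v : {v : V // B.Plain r v}) (b : Bool) :
    (B.auxGraph r).ohead (Sum.inr v, b) = Sum.inr (v, !b) := by
  cases b <;> rfl

@[simp] theorem aux_otail_inr (B : BidirGraph V E) (r : V) (v : {v : V // B.Plain r v}) (b : Bool) :
    (B.auxGraph r).otail (Sum.inr v, b) = Sum.inr (v, b) := by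
  cases b <;> rfl

@[simp] theorem aux_sign_inl_inl (B : BidirGraph V E) (r : V) (e : E) (u : {v : V // ¬ B.Plain r v}) :
    (B.auxGraph r).sign (Sum.inl e) (Sum.inl u) = B.sign e u.1 := rfl

@[simp] theorem aux_sign_inl_inr (B : BidirGraph V E) (r : V) (e : E) (w : {v : V // B.Plain r v} × Bool) :
    (B.auxGraph r).sign (Sum.inl e) (Sum.inr w) = w.2 := rfl

@[simp] theorem aux_sign_inr_inr (B : BidirGraph V E) (r : V) (v : {v : V // B.Plain r v}) (w : {v : V // B.Plain r v} × Bool) :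
    (B.auxGraph r).sign (Sum.inr v) (Sum.inr w) = !w.2 := rfl

theorem mapVtx_of_plain (B : BidirGraph V E) (r : V) (e : E) (u : V) (h : B.Plain r u) :
    B.mapVtx r e u = Sum.inr (⟨u, h⟩, B.sign e u) := by
  unfold mapVtx; rw [dif_pos h]

theorem mapVtx_of_not_plain (B : BidirGraph V E) (r : V) (e : E) (u : V) (h : ¬ B.Plain r u) :
    B.mapVtx r e u = Sum.inl ⟨u, h⟩ := by
  unfold mapVtx; rw [dif_neg h]

theorem not_plain_root (B : BidirGraph V E) (r : V) : ¬ B.Plain r r := fun h => h.1 rfl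

theorem auxRoot_eq_mapVtx (B : BidirGraph V E) (r : V) (e : E) :
    B.mapVtx r e r = B.auxRoot r := by
  rw [mapVtx_of_not_plain B r e r (B.not_plain_root r)]; rfl

end BidirGraph
namespace BidirGraph

variable {V E : Type}

open Classical in
/-- The auxiliary-edge insertion after an edge `oe` whose head is an internal vertex. -/
noncomputable def auxIns (B : BidirGraph V E) (r : V) (oe : E × Bool) :
    List (B.AuxE r × Bool) :=
  if h : B.Plain r (B.ohead oe) then
    [(Sum.inr ⟨B.ohead oe, h⟩, B.sign oe.1 (B.ohead oe))] else []

/-- The inverse of the contraction map: insert auxiliary edges at plain internal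
vertices. -/
noncomputable def expandAux (B : BidirGraph V E) (r : V) :
    List (E × Bool) → List (B.AuxE r × Bool)
  | [] => []
  | [oe] => [(Sum.inl oe.1, oe.2)]
  | oe :: oe' :: rest =>
      (Sum.inl oe.1, oe.2) :: (B.auxIns r oe ++ B.expandAux r (oe' :: rest))

@[simp] theorem expandAux_nil (B : BidirGraph V E) (r : V) :
    B.expandAux r [] = [] := rfl

@[simp] theorem expandAux_single (B : BidirGraph V E) (r : V) (oe : E × Bool) :
    B.expandAux r [oe] = [(Sum.inl oe.1, oe.2)] := rfl

@[simp] theorem expandAux_cons₂ (B : BidirGraph V E) (r : V) (oe oe' : E × Bool)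
    (rest : List (E × Bool)) :
    B.expandAux r (oe :: oe' :: rest) =
      (Sum.inl oe.1, oe.2) :: (B.auxIns r oe ++ B.expandAux r (oe' :: rest)) := rfl

@[simp] theorem contractAux_nil (B : BidirGraph V E) (r : V) :
    B.contractAux r [] = [] := rfl

@[simp] theorem contractAux_cons_inl (B : BidirGraph V E) (r : V) (e : E) (b : Bool)
    (L : List (B.AuxE r × Bool)) :
    B.contractAux r ((Sum.inl e, b) :: L) = (e, b) :: B.contractAux r L := rfl

@[simp] theorem contractAux_cons_inr (B : BidirGraph V E) (r : V)
    (v : {v : V // B.Plain r v}) (b : Bool) (L : List (B.AuxE r × Bool)) :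
    B.contractAux r ((Sum.inr v, b) :: L) = B.contractAux r L := rfl

@[simp] theorem contractAux_auxIns (B : BidirGraph V E) (r : V) (oe : E × Bool)
    (L : List (B.AuxE r × Bool)) :
    B.contractAux r (B.auxIns r oe ++ L) = B.contractAux r L := by
  unfold auxIns; split <;> simp [contractAux]

theorem contract_expand (B : BidirGraph V E) (r : V) :
    ∀ M : List (E × Bool), B.contractAux r (B.expandAux r M) = M
  | [] => rfl
  | [oe] => rfl
  | oe :: oe' :: rest => by
      rw [expandAux_cons₂, contractAux_cons_inl, contractAux_auxIns,
        contract_expand B r (oe' :: rest)]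

theorem expandAux_ne_nil (B : BidirGraph V E) (r : V) (oe : E × Bool)
    (M : List (E × Bool)) : B.expandAux r (oe :: M) ≠ [] := by
  cases M <;> simp

theorem expandAux_head (B : BidirGraph V E) (r : V) (oe : E × Bool)
    (M : List (E × Bool)) :
    ∃ T, B.expandAux r (oe :: M) = (Sum.inl oe.1, oe.2) :: T := by
  cases M <;> simp

theorem properLast_expand (B : BidirGraph V E) (r : V) :
    ∀ M : List (E × Bool), B.ProperLast r (B.expandAux r M)
  | [] => by intro oe h; simp at h
  | [oe] => by intro x h; simp at h; subst h; exact ⟨oe.1, rfl⟩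
  | oe :: oe' :: rest => by
      have ih := properLast_expand B r (oe' :: rest)
      intro x hx
      apply ih
      rw [expandAux_cons₂, ← List.cons_append,
        List.getLast?_append_of_ne_nil _ (expandAux_ne_nil B r oe' rest)] at hx
      exact hx

end BidirGraph
namespace BidirGraph

variable {V E : Type}

theorem expandAux_single' (B : BidirGraph V E) (r : V) (e : E) (b : Bool) :
    B.expandAux r [(e, b)] = [(Sum.inl e, b)] := rfl

theorem expandAux_cons₂' (B : BidirGraph V E) (r : V) (e : E) (b : Bool)
    (oe' : E × Bool) (rest : List (E × Bool)) :
    B.expandAux r ((e, b) :: oe' :: rest) =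
      (Sum.inl e, b) :: (B.auxIns r (e, b) ++ B.expandAux r (oe' :: rest)) := rfl

theorem auxIns_plain (B : BidirGraph V E) (r : V) (e : E) (b : Bool)
    (h : B.Plain r (B.ohead (e, b))) :
    B.auxIns r (e, b) =
      [(Sum.inr ⟨B.ohead (e, b), h⟩, B.sign e (B.ohead (e, b)))] := by
  unfold auxIns
  rw [dif_pos h]

theorem auxIns_not_plain (B : BidirGraph V E) (r : V) (e : E) (b : Bool)
    (h : ¬ B.Plain r (B.ohead (e, b))) :
    B.auxIns r (e, b) = [] := by
  unfold auxIns
  rw [dif_neg h]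

end BidirGraph
namespace BidirGraph

variable {V E : Type} {B : BidirGraph V E} {r : V}

theorem aux_inr_eq {v v' : {v : V // B.Plain r v}} {c c' : Bool} :
    (Sum.inr (v, c) : B.AuxV r) = Sum.inr (v', c') ↔ v.1 = v'.1 ∧ c = c' := by
  constructor
  · intro h
    have h2 : (v, c) = (v', c') := Sum.inr.inj h
    rw [Prod.ext_iff] at h2
    exact ⟨congrArg Subtype.val h2.1, h2.2⟩
  · rintro ⟨h1, rfl⟩
    have : v = v' := Subtype.ext h1
    subst this; rfl

theorem not_plain_of_ra_inl_inl {oe oe' : E × Bool}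
    (h : (B.auxGraph r).chainRel (Sum.inl oe.1, oe.2) (Sum.inl oe'.1, oe'.2)) :
    ¬ B.Plain r (B.ohead oe) := by
  intro hp
  have h2 := h.2
  rw [aux_ohead_inl] at h2
  rw [mapVtx_of_plain B r oe.1 (B.ohead (oe.1, oe.2)) hp] at h2
  simp at h2

theorem rb_of_ra_inl_inl {oe oe' : E × Bool}
    (h : (B.auxGraph r).chainRel (Sum.inl oe.1, oe.2) (Sum.inl oe'.1, oe'.2)) :
    B.chainRel oe oe' := by
  have hnp : ¬ B.Plain r (B.ohead oe) := not_plain_of_ra_inl_inl h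
  obtain ⟨h1, h2⟩ := h
  rw [aux_ohead_inl, aux_otail_inl] at h1
  have hv : B.ohead oe = B.otail oe' := by
    have := congrArg (B.projV r) h1; simpa using this
  constructor
  · exact hv
  · rw [aux_ohead_inl, mapVtx_of_not_plain B r oe.1 _ hnp] at h2
    simpa using h2

theorem ra_inl_inl_of_rb {oe oe' : E × Bool} (hnp : ¬ B.Plain r (B.ohead oe))
    (h : B.chainRel oe oe') :
    (B.auxGraph r).chainRel (Sum.inl oe.1, oe.2) (Sum.inl oe'.1, oe'.2) := by
  have ht : B.otail oe' = B.ohead oe := h.1.symm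
  constructor
  · rw [aux_ohead_inl, aux_otail_inl, mapVtx_of_not_plain B r oe.1 _ hnp,
      mapVtx_of_not_plain B r oe'.1 _ (by rw [ht]; exact hnp)]
    simp [ht]
  · rw [aux_ohead_inl, mapVtx_of_not_plain B r oe.1 _ hnp]
    simpa using h.2

theorem ra_inl_inr {oe : E × Bool} {v : {v : V // B.Plain r v}} {c : Bool}
    (h : (B.auxGraph r).chainRel (Sum.inl oe.1, oe.2) (Sum.inr v, c)) :
    B.ohead oe = v.1 ∧ B.sign oe.1 (B.ohead oe) = c := by
  have h1 := h.1
  rw [aux_ohead_inl, aux_otail_inr] at h1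
  by_cases hp : B.Plain r (B.ohead oe)
  · rw [mapVtx_of_plain B r oe.1 _ hp] at h1
    rw [aux_inr_eq] at h1
    exact ⟨h1.1, h1.2⟩
  · rw [mapVtx_of_not_plain B r oe.1 _ hp] at h1
    simp at h1

theorem ra_inr_inl {oe : E × Bool} {v : {v : V // B.Plain r v}} {c : Bool}
    (h : (B.auxGraph r).chainRel (Sum.inr v, c) (Sum.inl oe.1, oe.2)) :
    B.otail oe = v.1 ∧ B.sign oe.1 (B.otail oe) = !c := by
  have h1 := h.1
  rw [aux_ohead_inr, aux_otail_inl] at h1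
  by_cases hp : B.Plain r (B.otail oe)
  · rw [mapVtx_of_plain B r oe.1 _ hp] at h1
    rw [aux_inr_eq] at h1
    exact ⟨h1.1.symm, h1.2.symm⟩
  · rw [mapVtx_of_not_plain B r oe.1 _ hp] at h1
    simp at h1

theorem not_ra_inr_inr {v v' : {v : V // B.Plain r v}} {c c' : Bool} :
    ¬ (B.auxGraph r).chainRel (Sum.inr v, c) (Sum.inr v', c') := by
  intro h
  have h2 := h.2
  rw [aux_ohead_inr] at h2
  simp at h2

theorem ra_inl_aux {oe : E × Bool} (h : B.Plain r (B.ohead oe)) :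
    (B.auxGraph r).chainRel (Sum.inl oe.1, oe.2)
      (Sum.inr ⟨B.ohead oe, h⟩, B.sign oe.1 (B.ohead oe)) := by
  constructor
  · rw [aux_ohead_inl, aux_otail_inr, mapVtx_of_plain B r oe.1 _ h]
  · rw [aux_ohead_inl, mapVtx_of_plain B r oe.1 _ h]
    simp

theorem ra_aux_inl {oe oe' : E × Bool} (h : B.Plain r (B.ohead oe))
    (hr : B.chainRel oe oe') :
    (B.auxGraph r).chainRel (Sum.inr ⟨B.ohead oe, h⟩, B.sign oe.1 (B.ohead oe))
      (Sum.inl oe'.1, oe'.2) := by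
  have ht : B.otail oe' = B.ohead oe := hr.1.symm
  have hs : B.sign oe'.1 (B.ohead oe) = !(B.sign oe.1 (B.ohead oe)) := by
    have := hr.2; revert this
    cases B.sign oe'.1 (B.ohead oe) <;> cases B.sign oe.1 (B.ohead oe) <;> simp
  constructor
  · rw [aux_ohead_inr, aux_otail_inl, mapVtx_of_plain B r oe'.1 _ (ht ▸ h)]
    rw [aux_inr_eq]
    exact ⟨ht.symm, by rw [ht, hs]⟩
  · rw [aux_ohead_inr]
    simp

theorem rb_of_ra_via_aux {oe oe' : E × Bool} {v : {v : V // B.Plain r v}} {c : Bool}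
    (h1 : (B.auxGraph r).chainRel (Sum.inl oe.1, oe.2) (Sum.inr v, c))
    (h2 : (B.auxGraph r).chainRel (Sum.inr v, c) (Sum.inl oe'.1, oe'.2)) :
    B.chainRel oe oe' := by
  obtain ⟨ha, hb⟩ := ra_inl_inr h1
  obtain ⟨hc, hd⟩ := ra_inr_inl h2
  constructor
  · rw [ha, hc]
  · have h5 : B.sign oe'.1 (B.ohead oe) = !c := by rw [ha, ← hc]; exact hd
    rw [hb, h5]
    cases c <;> simp

end BidirGraph
namespace BidirGraph

variable {V E : Type}

theorem chain'_expand (B : BidirGraph V E) (r : V) :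
    ∀ M : List (E × Bool),
      (B.expandAux r M).Chain' (B.auxGraph r).chainRel ↔ M.Chain' B.chainRel
  | [] => by simp [List.Chain']
  | [oe] => by simp [List.Chain']
  | oe :: oe' :: rest => by
    have ih := chain'_expand B r (oe' :: rest)
    simp only [List.Chain'] at ih ⊢
    obtain ⟨T, hT⟩ := B.expandAux_head r oe' rest
    rw [expandAux_cons₂]
    by_cases h : B.Plain r (B.ohead oe)
    · rw [auxIns, dif_pos h, hT]
      rw [List.singleton_append, List.isChain_cons_cons, List.isChain_cons_cons, ← hT, ih,
        List.isChain_cons_cons]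
      constructor
      · rintro ⟨-, h2, h3⟩
        exact ⟨rb_of_ra_via_aux (ra_inl_aux h) h2, h3⟩
      · rintro ⟨h1, h2⟩
        exact ⟨ra_inl_aux h, ra_aux_inl h h1, h2⟩
    · rw [auxIns, dif_neg h, List.nil_append, hT, List.isChain_cons_cons, ← hT, ih,
        List.isChain_cons_cons]
      constructor
      · rintro ⟨h1, h2⟩
        exact ⟨rb_of_ra_inl_inl h1, h2⟩
      · rintro ⟨h1, h2⟩
        exact ⟨ra_inl_inl_of_rb h h1, h2⟩

theorem expandAux_head? (B : BidirGraph V E) (r : V) (M : List (E × Bool)) :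
    (B.expandAux r M).head? = M.head?.map (fun oe => (Sum.inl oe.1, oe.2)) := by
  match M with
  | [] => rfl
  | [oe] => rfl
  | oe :: oe' :: rest => rfl

theorem head_cond_expand (B : BidirGraph V E) (r : V) (M : List (E × Bool)) :
    (∀ oe ∈ (B.expandAux r M).head?, (B.auxGraph r).otail oe = B.auxRoot r) ↔
      (∀ oe ∈ M.head?, B.otail oe = r) := by
  cases M with
  | nil => simp
  | cons oe M' =>
    have hh : (B.expandAux r (oe :: M')).head? = some (Sum.inl oe.1, oe.2) := by
      rw [expandAux_head?]; rfl
    rw [hh]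
    constructor
    · intro h x hx
      simp only [List.head?_cons, Option.mem_def, Option.some.injEq] at hx
      subst hx
      have h2 := h (Sum.inl oe.1, oe.2) rfl
      rw [aux_otail_inl] at h2
      have h3 := congrArg (B.projV r) h2
      simpa using h3
    · intro h x hx
      simp only [Option.mem_def, Option.some.injEq] at hx
      subst hx
      rw [aux_otail_inl, h oe (by simp), auxRoot_eq_mapVtx]

theorem mem_contract_fst (B : BidirGraph V E) (r : V) (e : E)
    (L : List (B.AuxE r × Bool)) (h : e ∈ (B.contractAux r L).map Prod.fst) :
    Sum.inl e ∈ L.map Prod.fst := by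
  induction L with
  | nil => simp [contractAux] at h
  | cons x L ih =>
    obtain ⟨xe, xb⟩ := x
    cases xe with
    | inl e0 =>
      rw [contractAux_cons_inl] at h
      simp only [List.map_cons, List.mem_cons] at h ⊢
      rcases h with h | h
      · exact Or.inl (by simp [h])
      · exact Or.inr (ih h)
    | inr v =>
      rw [contractAux_cons_inr] at h
      simp only [List.map_cons, List.mem_cons]
      exact Or.inr (ih h)

theorem contract_fst_nodup (B : BidirGraph V E) (r : V)
    (L : List (B.AuxE r × Bool)) (h : (L.map Prod.fst).Nodup) :
    ((B.contractAux r L).map Prod.fst).Nodup := by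
  induction L with
  | nil => simp [contractAux]
  | cons x L ih =>
    obtain ⟨xe, xb⟩ := x
    simp only [List.map_cons, List.nodup_cons] at h
    cases xe with
    | inl e0 =>
      rw [contractAux_cons_inl]
      simp only [List.map_cons, List.nodup_cons]
      refine ⟨fun hc => h.1 (B.mem_contract_fst r e0 L hc), ih h.2⟩
    | inr v =>
      rw [contractAux_cons_inr]
      exact ih h.2

theorem mem_expand_fst_inr (B : BidirGraph V E) (r : V) (v : {v : V // B.Plain r v}) :
    ∀ M : List (E × Bool),
      Sum.inr v ∈ (B.expandAux r M).map Prod.fst → v.1 ∈ M.map B.ohead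
  | [] => by simp
  | [oe] => by simp
  | oe :: oe' :: rest => by
    intro h
    rw [expandAux_cons₂, List.map_cons, List.map_append] at h
    rcases List.mem_cons.1 h with h | h
    · exact absurd h (by simp)
    rcases List.mem_append.1 h with h | h
    · rw [auxIns] at h
      split at h
      · simp only [List.map_cons, List.map_nil, List.mem_singleton] at h
        have hv : v.1 = B.ohead oe := congrArg Subtype.val (Sum.inr.inj h)
        rw [List.map_cons]
        exact List.mem_cons.2 (Or.inl hv)
      · simp at h
    · have h2 := B.mem_expand_fst_inr r v (oe' :: rest) h
      rw [List.map_cons]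
      exact List.mem_cons.2 (Or.inr h2)

theorem mem_expand_fst_inl (B : BidirGraph V E) (r : V) (e : E) :
    ∀ M : List (E × Bool),
      Sum.inl e ∈ (B.expandAux r M).map Prod.fst → e ∈ M.map Prod.fst
  | [] => by simp
  | [oe] => by
    intro h
    simp only [expandAux_single, List.map_cons, List.map_nil, List.mem_singleton] at h
    have : e = oe.1 := Sum.inl.inj h
    simp [this]
  | oe :: oe' :: rest => by
    intro h
    rw [expandAux_cons₂, List.map_cons, List.map_append] at h
    rcases List.mem_cons.1 h with h | h
    · have : e = oe.1 := Sum.inl.inj h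
      simp [this]
    rcases List.mem_append.1 h with h | h
    · rw [auxIns] at h
      split at h <;> simp at h
    · have h2 := B.mem_expand_fst_inl r e (oe' :: rest) h
      rw [List.map_cons]
      exact List.mem_cons.2 (Or.inr h2)

theorem expand_fst_nodup (B : BidirGraph V E) (r : V) :
    ∀ M : List (E × Bool), (M.map Prod.fst).Nodup → (M.map B.ohead).Nodup →
      ((B.expandAux r M).map Prod.fst).Nodup
  | [] => by simp
  | [oe] => by simp
  | oe :: oe' :: rest => by
    intro he hv
    rw [List.map_cons, List.nodup_cons] at he hv
    have ih := B.expand_fst_nodup r (oe' :: rest) he.2 hv.2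
    rw [expandAux_cons₂, List.map_cons, List.map_append, List.nodup_cons,
      List.mem_append, List.nodup_append]
    refine ⟨?_, ?_, ih, ?_⟩
    · rintro (h | h)
      · rw [auxIns] at h; split at h <;> simp at h
      · exact he.1 (B.mem_expand_fst_inl r oe.1 (oe' :: rest) h)
    · rw [auxIns]; split <;> simp
    · intro a ha b hb hab; subst hab
      rw [auxIns] at ha
      split at ha
      · simp only [List.map_cons, List.map_nil, List.mem_singleton] at ha
        subst ha
        exact hv.1 (B.mem_expand_fst_inr r _ (oe' :: rest) hb)
      · simp at ha

end BidirGraph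
namespace BidirGraph

variable {V E : Type}

theorem mem_heads_expand (B : BidirGraph V E) (r : V) (x : B.AuxV r) :
    ∀ M : List (E × Bool),
      x ∈ (B.expandAux r M).map (B.auxGraph r).ohead → B.projV r x ∈ M.map B.ohead
  | [] => by simp
  | [oe] => by
    obtain ⟨e, b⟩ := oe
    intro h
    rw [expandAux_single', List.map_cons, List.map_nil, List.mem_singleton,
      aux_ohead_inl] at h
    subst h
    rw [projV_mapVtx, List.map_cons]
    exact List.mem_cons.2 (Or.inl rfl)
  | oe :: oe' :: rest => by
    obtain ⟨e, b⟩ := oe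
    intro h
    rw [expandAux_cons₂', List.map_cons, List.map_append, aux_ohead_inl] at h
    rcases List.mem_cons.1 h with h | h
    · subst h
      rw [projV_mapVtx, List.map_cons]
      exact List.mem_cons.2 (Or.inl rfl)
    rcases List.mem_append.1 h with h | h
    · by_cases hp : B.Plain r (B.ohead (e, b))
      · rw [auxIns_plain B r e b hp, List.map_cons, List.map_nil, List.mem_singleton,
          aux_ohead_inr] at h
        subst h
        rw [List.map_cons]
        exact List.mem_cons.2 (Or.inl rfl)
      · rw [auxIns_not_plain B r e b hp] at h
        simp at h
    · have h2 := B.mem_heads_expand r x (oe' :: rest) h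
      rw [List.map_cons]
      exact List.mem_cons.2 (Or.inr h2)

theorem exists_head_expand (B : BidirGraph V E) (r : V) (v : V) :
    ∀ M : List (E × Bool), v ∈ M.map B.ohead →
      ∃ x ∈ (B.expandAux r M).map (B.auxGraph r).ohead, B.projV r x = v
  | [] => by simp
  | [oe] => by
    obtain ⟨e, b⟩ := oe
    intro h
    rw [List.map_cons, List.map_nil, List.mem_singleton] at h
    refine ⟨B.mapVtx r e (B.ohead (e, b)), ?_, by rw [projV_mapVtx]; exact h.symm⟩
    rw [expandAux_single', List.map_cons, List.map_nil, aux_ohead_inl]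
    exact List.mem_singleton.2 rfl
  | oe :: oe' :: rest => by
    obtain ⟨e, b⟩ := oe
    intro h
    rw [List.map_cons] at h
    rcases List.mem_cons.1 h with h | h
    · refine ⟨B.mapVtx r e (B.ohead (e, b)), ?_, by rw [projV_mapVtx]; exact h.symm⟩
      rw [expandAux_cons₂', List.map_cons, aux_ohead_inl]
      exact List.mem_cons.2 (Or.inl rfl)
    · obtain ⟨x, hx, hpx⟩ := B.exists_head_expand r v (oe' :: rest) h
      refine ⟨x, ?_, hpx⟩
      rw [expandAux_cons₂', List.map_cons, List.map_append]
      exact List.mem_cons.2 (Or.inr (List.mem_append.2 (Or.inr hx)))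

theorem eq_inl_of_projV (B : BidirGraph V E) (r : V) {v : V} (hn : ¬ B.Plain r v)
    {x : B.AuxV r} (hx : B.projV r x = v) : x = Sum.inl ⟨v, hn⟩ := by
  cases x with
  | inl u =>
    obtain ⟨u, hu⟩ := u
    have hx' : u = v := hx
    subst hx'
    rfl
  | inr w =>
    obtain ⟨⟨u, hu⟩, c⟩ := w
    have hx' : u = v := hx
    subst hx'
    exact absurd hu hn

theorem eq_inr_of_projV (B : BidirGraph V E) (r : V) {v : V} (hp : B.Plain r v)
    {x : B.AuxV r} (hx : B.projV r x = v) : ∃ c, x = Sum.inr (⟨v, hp⟩, c) := by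
  cases x with
  | inl u =>
    obtain ⟨u, hu⟩ := u
    have hx' : u = v := hx
    subst hx'
    exact absurd hp hu
  | inr w =>
    obtain ⟨⟨u, hu⟩, c⟩ := w
    have hx' : u = v := hx
    subst hx'
    exact ⟨c, rfl⟩

theorem expand_vertex_nodup (B : BidirGraph V E) (r : V) :
    ∀ M : List (E × Bool), (r :: M.map B.ohead).Nodup →
      (B.auxRoot r :: (B.expandAux r M).map (B.auxGraph r).ohead).Nodup
  | [] => by simp
  | [oe] => by
    obtain ⟨e, b⟩ := oe
    intro h
    rw [List.map_cons, List.map_nil] at h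
    rw [expandAux_single', List.map_cons, List.map_nil, aux_ohead_inl]
    refine List.nodup_cons.2 ⟨?_, List.nodup_cons.2 ⟨List.not_mem_nil, List.nodup_nil⟩⟩
    intro hc
    rw [List.mem_singleton] at hc
    have hr : r = B.ohead (e, b) := by
      have := congrArg (B.projV r) hc
      simpa using this
    have := List.nodup_cons.1 h
    exact this.1 (List.mem_singleton.2 hr)
  | oe :: oe' :: rest => by
    obtain ⟨e, b⟩ := oe
    intro h
    rw [List.map_cons, List.nodup_cons, List.nodup_cons] at h
    obtain ⟨hr, hvt, ht⟩ := h
    have hrv : r ≠ B.ohead (e, b) := fun hc => hr (List.mem_cons.2 (Or.inl hc))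
    have hrt : r ∉ (oe' :: rest).map B.ohead :=
      fun hc => hr (List.mem_cons.2 (Or.inr hc))
    have ih := B.expand_vertex_nodup r (oe' :: rest) (List.nodup_cons.2 ⟨hrt, ht⟩)
    rw [List.nodup_cons] at ih
    rw [expandAux_cons₂', List.map_cons, List.map_append, aux_ohead_inl]
    by_cases hp : B.Plain r (B.ohead (e, b))
    · rw [auxIns_plain B r e b hp, mapVtx_of_plain B r e _ hp, List.map_cons,
        List.map_nil, aux_ohead_inr, List.cons_append, List.nil_append]
      refine List.nodup_cons.2 ⟨?_, List.nodup_cons.2 ⟨?_, List.nodup_cons.2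
        ⟨?_, ih.2⟩⟩⟩
      · intro hc
        rcases List.mem_cons.1 hc with hc | hc
        · exact absurd hc (by simp [auxRoot])
        rcases List.mem_cons.1 hc with hc | hc
        · exact absurd hc (by simp [auxRoot])
        · exact ih.1 hc
      · intro hc
        rcases List.mem_cons.1 hc with hc | hc
        · have := (aux_inr_eq.1 hc).2
          simp at this
        · exact hvt (B.mem_heads_expand r _ (oe' :: rest) hc)
      · intro hc
        exact hvt (B.mem_heads_expand r _ (oe' :: rest) hc)
    · rw [auxIns_not_plain B r e b hp, mapVtx_of_not_plain B r e _ hp, List.map_nil,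
        List.nil_append]
      refine List.nodup_cons.2 ⟨?_, List.nodup_cons.2 ⟨?_, ih.2⟩⟩
      · intro hc
        rcases List.mem_cons.1 hc with hc | hc
        · exact hrv (congrArg (B.projV r) hc)
        · exact ih.1 hc
      · intro hc
        exact hvt (B.mem_heads_expand r _ (oe' :: rest) hc)

theorem vertex_nodup_of_expand (B : BidirGraph V E) (r : V) :
    ∀ M : List (E × Bool),
      (B.auxRoot r :: (B.expandAux r M).map (B.auxGraph r).ohead).Nodup →
      (r :: M.map B.ohead).Nodup
  | [] => by simp
  | [oe] => by
    obtain ⟨e, b⟩ := oe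
    intro h
    rw [expandAux_single', List.map_cons, List.map_nil, aux_ohead_inl] at h
    rw [List.map_cons, List.map_nil]
    refine List.nodup_cons.2 ⟨?_, List.nodup_cons.2 ⟨List.not_mem_nil, List.nodup_nil⟩⟩
    intro hc
    rw [List.mem_singleton] at hc
    have h1 := (List.nodup_cons.1 h).1
    apply h1
    rw [List.mem_singleton, ← hc, auxRoot_eq_mapVtx]
  | oe :: oe' :: rest => by
    obtain ⟨e, b⟩ := oe
    intro h
    rw [expandAux_cons₂', List.map_cons, List.map_append, aux_ohead_inl,
      List.nodup_cons, List.nodup_cons] at h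
    obtain ⟨h0, h1, h2⟩ := h
    have haux : B.auxRoot r ∉ (B.expandAux r (oe' :: rest)).map (B.auxGraph r).ohead :=
      fun hc => h0 (List.mem_cons.2 (Or.inr (List.mem_append.2 (Or.inr hc))))
    have htail : ((B.expandAux r (oe' :: rest)).map (B.auxGraph r).ohead).Nodup :=
      h2.sublist (List.sublist_append_right _ _)
    have ih := B.vertex_nodup_of_expand r (oe' :: rest)
      (List.nodup_cons.2 ⟨haux, htail⟩)
    obtain ⟨ihr, ihn⟩ := List.nodup_cons.1 ih
    rw [List.map_cons]
    have hvt : B.ohead (e, b) ∉ (oe' :: rest).map B.ohead := by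
      intro hmem
      obtain ⟨x, hx, hpx⟩ := B.exists_head_expand r (B.ohead (e, b)) (oe' :: rest) hmem
      by_cases hp : B.Plain r (B.ohead (e, b))
      · obtain ⟨c, rfl⟩ := B.eq_inr_of_projV r hp hpx
        rcases Bool.eq_or_eq_not c (B.sign e (B.ohead (e, b))) with hc | hc
        · subst hc
          apply h1
          refine List.mem_append.2 (Or.inr ?_)
          rw [mapVtx_of_plain B r e _ hp]
          exact hx
        · subst hc
          rw [List.nodup_append] at h2
          apply h2.2.2 _ ?_ _ hx rfl
          rw [auxIns_plain B r e b hp, List.map_cons, List.map_nil, aux_ohead_inr]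
          exact List.mem_singleton.2 rfl
      · have hxe := B.eq_inl_of_projV r hp hpx
        subst hxe
        apply h1
        refine List.mem_append.2 (Or.inr ?_)
        rw [mapVtx_of_not_plain B r e _ hp]
        exact hx
    refine List.nodup_cons.2 ⟨?_, List.nodup_cons.2 ⟨hvt, ihn⟩⟩
    intro hc
    rcases List.mem_cons.1 hc with hc | hc
    · apply h0
      refine List.mem_cons.2 (Or.inl ?_)
      have hm := B.auxRoot_eq_mapVtx r e
      rw [← hc]
      exact hm.symm
    · exact ihr hc

end BidirGraph
namespace BidirGraph

variable {V E : Type}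

theorem isPathFrom_expand_iff (B : BidirGraph V E) (r : V) (M : List (E × Bool)) :
    B.IsPathFrom r M ↔ (B.auxGraph r).IsPathFrom (B.auxRoot r) (B.expandAux r M) := by
  unfold IsPathFrom
  rw [isTrailFrom_def, isTrailFrom_def]
  constructor
  · rintro ⟨⟨he, hh, hc⟩, hv⟩
    refine ⟨⟨?_, ?_, ?_⟩, ?_⟩
    · exact B.expand_fst_nodup r M he (List.nodup_cons.1 hv).2
    · exact (B.head_cond_expand r M).2 hh
    · exact (chain'_expand B r M).2 hc
    · exact B.expand_vertex_nodup r M hv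
  · rintro ⟨⟨he, hh, hc⟩, hv⟩
    refine ⟨⟨?_, ?_, ?_⟩, ?_⟩
    · have h2 := B.contract_fst_nodup r _ he
      rwa [contract_expand] at h2
    · exact (B.head_cond_expand r M).1 hh
    · exact (chain'_expand B r M).1 hc
    · exact B.vertex_nodup_of_expand r M hv

theorem expand_contract (B : BidirGraph V E) (r : V) :
    ∀ L : List (B.AuxE r × Bool),
      L.Chain' (B.auxGraph r).chainRel → B.ProperLast r L →
      (∀ x ∈ L.head?, ∃ e0 : E, x.1 = Sum.inl e0) →
      B.expandAux r (B.contractAux r L) = L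
  | [] => fun _ _ _ => rfl
  | [(Sum.inl e, b)] => fun _ _ _ => rfl
  | [(Sum.inr v, c)] => fun _ _ hh => by
      obtain ⟨e0, he0⟩ := hh (Sum.inr v, c) rfl
      exact absurd he0 (by simp)
  | (Sum.inr v, c) :: T => fun _ _ hh => by
      obtain ⟨e0, he0⟩ := hh (Sum.inr v, c) rfl
      exact absurd he0 (by simp)
  | (Sum.inl e, b) :: (Sum.inl e', b') :: T => fun hc hp _ => by
      obtain ⟨hR, hc'⟩ := List.isChain_cons_cons.1 hc
      have hnp : ¬ B.Plain r (B.ohead (e, b)) :=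
        not_plain_of_ra_inl_inl (oe := (e, b)) (oe' := (e', b')) hR
      have ih := B.expand_contract r ((Sum.inl e', b') :: T) hc'
        (by
          intro x hx
          apply hp
          rwa [List.getLast?_cons_cons])
        (by rintro x hx; rw [List.head?_cons, Option.mem_def, Option.some.injEq] at hx
            subst hx; exact ⟨e', rfl⟩)
      rw [contractAux_cons_inl, contractAux_cons_inl, expandAux_cons₂',
        auxIns_not_plain B r e b hnp, List.nil_append, ← contractAux_cons_inl, ih]
  | (Sum.inl e, b) :: (Sum.inr v, c) :: [] => fun _ hp _ => by
      obtain ⟨e0, he0⟩ := hp (Sum.inr v, c) (by simp)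
      exact absurd he0 (by simp)
  | (Sum.inl e, b) :: (Sum.inr v, c) :: (Sum.inr v', c') :: T => fun hc _ _ => by
      obtain ⟨_, hc2⟩ := List.isChain_cons_cons.1 hc
      obtain ⟨hR, _⟩ := List.isChain_cons_cons.1 hc2
      exact absurd hR (not_ra_inr_inr)
  | (Sum.inl e, b) :: (Sum.inr v, c) :: (Sum.inl e', b') :: T => fun hc hp _ => by
      obtain ⟨hR1, hc2⟩ := List.isChain_cons_cons.1 hc
      obtain ⟨hR2, hc3⟩ := List.isChain_cons_cons.1 hc2
      obtain ⟨hov, hsv⟩ := ra_inl_inr (oe := (e, b)) hR1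
      have hpl : B.Plain r (B.ohead (e, b)) := hov ▸ v.2
      have hveq : (⟨B.ohead (e, b), hpl⟩ : {v : V // B.Plain r v}) = v :=
        Subtype.ext hov
      have hins : B.auxIns r (e, b) = [(Sum.inr v, c)] := by
        rw [auxIns_plain B r e b hpl, hveq, hsv]
      have ih := B.expand_contract r ((Sum.inl e', b') :: T) hc3
        (by
          intro x hx
          apply hp
          rwa [List.getLast?_cons_cons, List.getLast?_cons_cons])
        (by rintro x hx; rw [List.head?_cons, Option.mem_def, Option.some.injEq] at hx
            subst hx; exact ⟨e', rfl⟩)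
      rw [contractAux_cons_inl, contractAux_cons_inr, contractAux_cons_inl,
        expandAux_cons₂', hins, ← contractAux_cons_inl, ih, List.singleton_append]

theorem proper_path_expand_eq (B : BidirGraph V E) (r : V) {L : List (B.AuxE r × Bool)}
    (h : (B.auxGraph r).IsPathFrom (B.auxRoot r) L) (hp : B.ProperLast r L) :
    B.expandAux r (B.contractAux r L) = L := by
  apply B.expand_contract r L h.1.2.2 hp
  intro x hx
  have hot := h.1.2.1 x hx
  obtain ⟨xe, xb⟩ := x
  cases xe with
  | inl e0 => exact ⟨e0, rfl⟩
  | inr v =>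
    rw [aux_otail_inr] at hot
    exact absurd hot (by simp [auxRoot])

end BidirGraph
open BidirGraph in
/-- the contraction map `g_B` is a bijection from the set of proper
`r`-paths of the auxiliary graph `a(B)` onto the set of `r`-paths of `B`. -/
theorem stmt15 {V E : Type} (B : BidirGraph V E) (r : V) :
    Set.BijOn (B.contractAux r)
      {L | (B.auxGraph r).IsPathFrom (B.auxRoot r) L ∧ B.ProperLast r L}
      {L | B.IsPathFrom r L} := by
  refine ⟨?_, ?_, ?_⟩
  · rintro L ⟨hL, hPL⟩
    have hEq := B.proper_path_expand_eq r hL hPL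
    show B.IsPathFrom r (B.contractAux r L)
    rw [B.isPathFrom_expand_iff r, hEq]
    exact hL
  · rintro L1 ⟨h1, hp1⟩ L2 ⟨h2, hp2⟩ heq
    rw [← B.proper_path_expand_eq r h1 hp1, ← B.proper_path_expand_eq r h2 hp2, heq]
  · rintro M hM
    exact ⟨B.expandAux r M,
      ⟨(B.isPathFrom_expand_iff r M).1 hM, B.properLast_expand r M⟩,
      B.contract_expand r M⟩
end

section
/- Let B be a clean bidirected graph rooted at r, let x ≠ r be a vertex of B, and let P and Q be two families of pairwise internally vertex-disjoint r–x paths in B. Then there exists a family R of pairwise internally vertex-disjoint r–x paths in B such that every first edge of a path in P is the first edge of some path in R, and every last edge of a path in Q is the last edge of some path in R. -/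
namespace BidirGraph

variable {V E : Type} (B : BidirGraph V E)

/-- Flip the orientation of an oriented edge. -/
def oflip (oe : E × Bool) : E × Bool := (oe.1, !oe.2)

@[simp] lemma ohead_oflip (oe : E × Bool) : B.ohead (oflip oe) = B.otail oe := by
  cases oe with
  | mk e b => cases b <;> simp [ohead, otail, oflip]

@[simp] lemma otail_oflip (oe : E × Bool) : B.otail (oflip oe) = B.ohead oe := by
  cases oe with
  | mk e b => cases b <;> simp [ohead, otail, oflip]

lemma endpoints_pair (oe : E × Bool) :
    ((B.ends oe.1).1 = B.otail oe ∧ (B.ends oe.1).2 = B.ohead oe) ∨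
    ((B.ends oe.1).1 = B.ohead oe ∧ (B.ends oe.1).2 = B.otail oe) := by
  cases oe with
  | mk e b => cases b <;> simp [ohead, otail]

lemma ohead_ne_otail (oe : E × Bool) : B.ohead oe ≠ B.otail oe := by
  cases oe with
  | mk e b =>
    have := B.loopless e
    cases b <;> simp only [ohead, otail, if_true, if_false, Bool.false_eq_true, ite_false, ite_true]
    · exact this
    · exact this.symm

/-- The step relation in trails. -/
def TStep (a b : E × Bool) : Prop :=
  B.ohead a = B.otail b ∧ B.sign a.1 (B.ohead a) ≠ B.sign b.1 (B.ohead a)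

lemma isTrailFrom_iff (v : V) (L : List (E × Bool)) :
    B.IsTrailFrom v L ↔ (L.map Prod.fst).Nodup ∧
      (∀ oe ∈ L.head?, B.otail oe = v) ∧ L.Chain' B.TStep := Iff.rfl

lemma tstep_flip {a b : E × Bool} (h : B.TStep a b) : B.TStep (oflip b) (oflip a) := by
  obtain ⟨h1, h2⟩ := h
  have hb : B.ohead (oflip b) = B.ohead a := by rw [ohead_oflip]; exact h1.symm
  refine ⟨by rw [ohead_oflip, otail_oflip, ← h1], ?_⟩
  rw [hb]
  show B.sign b.1 (B.ohead a) ≠ B.sign a.1 (B.ohead a)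
  exact fun hh => h2 hh.symm

lemma IsTrailFrom.cons {v : V} {a : E × Bool} {l : List (E × Bool)}
    (h : B.IsTrailFrom v (a :: l)) : B.IsTrailFrom (B.ohead a) l := by
  obtain ⟨h1, _, h3⟩ := h
  have h1' : (l.map Prod.fst).Nodup := (by simpa using h1 : _ ∧ _).2
  refine ⟨h1', ?_, h3.tail⟩
  intro oe hoe
  cases l with
  | nil => simp at hoe
  | cons b l' =>
    simp at hoe
    subst hoe
    exact ((List.isChain_cons_cons.mp h3).1).1.symm

/-- The tails of a trail are the starting vertex followed by heads except the last. -/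
lemma map_otail_eq {v : V} {L : List (E × Bool)} (h : B.IsTrailFrom v L) :
    L.map B.otail = (v :: L.map B.ohead).dropLast := by
  induction L generalizing v with
  | nil => simp
  | cons a l ih =>
    have hv : B.otail a = v := h.2.1 a (by simp)
    have ih' := ih (h.cons)
    cases l with
    | nil => simpa using hv
    | cons b l' =>
      simp only [List.map_cons] at ih' ⊢
      rw [hv, ih']
      simp

end BidirGraph
namespace BidirGraph

variable {V E : Type} (B : BidirGraph V E)

lemma head?_take {α : Type} {L : List α} {n : ℕ} {a : α} (h : (L.take n).head? = some a) :
    L.head? = some a := by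
  cases hT : L.take n with
  | nil => rw [hT] at h; simp at h
  | cons b tl =>
    rw [hT] at h
    simp at h
    subst h
    have h2 := List.take_append_drop n L
    rw [hT] at h2
    rw [← h2]
    simp

variable {B}

lemma IsTrailFrom.take {v : V} {L : List (E × Bool)} (h : B.IsTrailFrom v L) (n : ℕ) :
    B.IsTrailFrom v (L.take n) := by
  refine ⟨?_, ?_, h.2.2.infix (L.take_prefix n).isInfix⟩
  · exact h.1.sublist (((L.take_sublist n)).map _)
  · intro oe hoe
    exact h.2.1 oe (head?_take hoe)

lemma chain'_get {α : Type} {R : α → α → Prop} {l : List α} (h : l.Chain' R)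
    {i : ℕ} (hi : i + 1 < l.length) :
    R (l.get ⟨i, by omega⟩) (l.get ⟨i + 1, hi⟩) := by
  rw [show l.Chain' R ↔ l.IsChain R from Iff.rfl, List.isChain_iff_getElem] at h
  exact h i (by omega)

lemma IsTrailFrom.drop {v : V} {L : List (E × Bool)} (h : B.IsTrailFrom v L)
    {p : ℕ} (hp : p < L.length) :
    B.IsTrailFrom (B.ohead (L.get ⟨p, hp⟩)) (L.drop (p + 1)) := by
  refine ⟨?_, ?_, h.2.2.infix (L.drop_suffix (p+1)).isInfix⟩
  · exact h.1.sublist (((L.drop_sublist (p+1))).map _)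
  · intro oe hoe
    rw [List.head?_drop] at hoe
    have hp1 : p + 1 < L.length := by
      by_contra hc
      rw [List.getElem?_eq_none (by omega)] at hoe
      simp at hoe
    rw [List.getElem?_eq_getElem hp1] at hoe
    have := chain'_get h.2.2 (i := p) (by omega)
    simp only [List.get_eq_getElem] at this ⊢
    cases hoe
    exact this.1.symm

lemma getLast?_take {α : Type} {L : List α} {p : ℕ} (hp : p < L.length) :
    (L.take (p + 1)).getLast? = some (L.get ⟨p, hp⟩) := by
  rw [List.take_succ, List.getElem?_eq_getElem hp]
  simp only [Option.toList_some]
  exact List.getLast?_concat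

lemma trailEnd_take {v : V} {L : List (E × Bool)} {p : ℕ} (hp : p < L.length) :
    B.trailEnd v (L.take (p + 1)) = B.ohead (L.get ⟨p, hp⟩) := by
  unfold trailEnd
  rw [getLast?_take hp]

lemma trailEnd_ne_start {v x : V} {L : List (E × Bool)} (hL : B.trailEnd v L = x) (hx : x ≠ v) :
    L ≠ [] := by
  intro hc
  subst hc
  simp [trailEnd] at hL
  exact hx hL.symm

lemma map_ohead_eq {v : V} {L : List (E × Bool)} (hL : L ≠ []) :
    L.map B.ohead = B.Internal L ++ [B.trailEnd v L] := by
  have h1 : L.getLast? = some (L.getLast hL) := List.getLast?_eq_getLast _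
  have h2 : (L.map B.ohead).getLast? = some (B.ohead (L.getLast hL)) := by
    rw [List.getLast?_map, h1]; rfl
  have h3 := List.dropLast_append_getLast? _ h2
  rw [Internal, trailEnd, h1]
  exact h3.symm

lemma IsTrailFrom.append {v w : V} {L1 L2 : List (E × Bool)} (h1 : B.IsTrailFrom v L1)
    (h2 : B.IsTrailFrom w L2) (hne : L1 ≠ [])
    (hj : ∀ a ∈ L1.getLast?, ∀ b ∈ L2.head?, B.TStep a b)
    (hd : ∀ e ∈ L1.map Prod.fst, e ∉ L2.map Prod.fst) :
    B.IsTrailFrom v (L1 ++ L2) := by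
  refine ⟨?_, ?_, List.isChain_append.mpr ⟨h1.2.2, h2.2.2, hj⟩⟩
  · rw [List.map_append]
    exact List.Nodup.append h1.1 h2.1 (fun e he1 he2 => hd e he1 he2)
  · intro oe hoe
    rw [List.head?_append_of_ne_nil _ hne] at hoe
    exact h1.2.1 oe hoe

/-- Reversal of a trail. -/
def trev (L : List (E × Bool)) : List (E × Bool) := (L.map oflip).reverse

@[simp] lemma trev_nil : (trev ([] : List (E × Bool))) = [] := rfl

lemma trev_ne_nil {L : List (E × Bool)} (h : L ≠ []) : trev L ≠ [] := by
  simp [trev, h]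

lemma map_fst_trev (L : List (E × Bool)) :
    (trev L).map Prod.fst = (L.map Prod.fst).reverse := by
  simp [trev, oflip, Function.comp]

lemma head?_trev (L : List (E × Bool)) : (trev L).head? = L.getLast?.map oflip := by
  rw [trev, List.head?_reverse, List.getLast?_map]

lemma getLast?_trev (L : List (E × Bool)) : (trev L).getLast? = L.head?.map oflip := by
  rw [trev, List.getLast?_reverse, List.head?_map]

lemma map_ohead_trev (B : BidirGraph V E) (L : List (E × Bool)) :
    (trev L).map B.ohead = (L.map B.otail).reverse := by
  rw [trev, List.map_reverse, List.map_map]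
  congr 1
  apply List.map_congr_left
  intro oe _
  simp [Function.comp]

lemma IsTrailFrom.trev_trail {v : V} {L : List (E × Bool)} (h : B.IsTrailFrom v L) :
    B.IsTrailFrom (B.trailEnd v L) (trev L) := by
  refine ⟨?_, ?_, ?_⟩
  · rw [map_fst_trev]
    exact List.nodup_reverse.mpr h.1
  · intro oe hoe
    rw [head?_trev] at hoe
    cases hL : L.getLast? with
    | none => rw [hL] at hoe; simp at hoe
    | some a =>
      rw [hL] at hoe
      simp at hoe
      subst hoe
      rw [otail_oflip, trailEnd, hL]
  · rw [trev]; show List.IsChain _ _; rw [List.isChain_reverse, List.isChain_map]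
    exact h.2.2.imp (fun a b hab => tstep_flip B hab)

lemma trailEnd_trev {v : V} {L : List (E × Bool)} (h : B.IsTrailFrom v L) (hne : L ≠ []) :
    B.trailEnd (B.trailEnd v L) (trev L) = v := by
  have h0 : L.head? = some (L.head hne) := List.head?_eq_head _
  unfold trailEnd
  rw [getLast?_trev, h0]
  simp only [Option.map_some]
  rw [ohead_oflip]
  exact h.2.1 _ h0

end BidirGraph
namespace BidirGraph

variable {V E : Type} {B : BidirGraph V E} {r x v : V} {L : List (E × Bool)}

lemma IsPathFrom.headsNodup (h : B.IsPathFrom r L) : (L.map B.ohead).Nodup :=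
  (List.nodup_cons.mp h.2).2

lemma IsPathFrom.start_not_mem (h : B.IsPathFrom r L) : r ∉ L.map B.ohead :=
  (List.nodup_cons.mp h.2).1

lemma internal_sublist (B : BidirGraph V E) (L : List (E × Bool)) :
    List.Sublist (B.Internal L) (L.map B.ohead) := List.dropLast_sublist _

lemma end_not_internal (h : B.IsPathFrom r L) (he : B.trailEnd r L = v) (hne : L ≠ []) :
    v ∉ B.Internal L := by
  have hd := map_ohead_eq (B := B) (v := r) hne
  rw [he] at hd
  have hn := h.headsNodup
  rw [hd, List.nodup_append] at hn
  intro hc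
  exact hn.2.2 v hc v (by simp) rfl

lemma mem_internal_of_ne_end (h : B.IsPathFrom r L) (he : B.trailEnd r L = v) (hne : L ≠ [])
    {w : V} (hw : w ∈ L.map B.ohead) (hwv : w ≠ v) : w ∈ B.Internal L := by
  have hd := map_ohead_eq (B := B) (v := r) hne
  rw [he] at hd
  rw [hd, List.mem_append] at hw
  rcases hw with hw | hw
  · exact hw
  · simp at hw; exact absurd hw hwv

lemma internal_ne_start (h : B.IsPathFrom r L) {w : V} (hw : w ∈ B.Internal L) : w ≠ r := by
  intro hc
  subst hc
  exact h.start_not_mem (List.Sublist.mem hw (internal_sublist B L))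

lemma map_otail_path (h : B.IsTrailFrom r L) (hne : L ≠ []) :
    L.map B.otail = r :: B.Internal L := by
  rw [map_otail_eq B h]
  unfold Internal
  cases hL : L.map B.ohead with
  | nil => simp at hL; exact absurd hL hne
  | cons a l => simp

/-- Both endpoints of an edge on a trail from `r` lie among `r :: heads`. -/
lemma edge_endpoint_mem (h : B.IsTrailFrom r L) (hne : L ≠ []) {oe : E × Bool} (hoe : oe ∈ L) :
    B.otail oe ∈ r :: B.Internal L ∧ B.ohead oe ∈ L.map B.ohead := by
  constructor
  · rw [← map_otail_path h hne]
    exact List.mem_map_of_mem hoe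
  · exact List.mem_map_of_mem hoe

/-- An occurrence on a path whose head is the final vertex must be the final edge. -/
lemma eq_last_of_ohead_end (h : B.IsPathFrom r L) (he : B.trailEnd r L = v)
    {a oe : E × Bool} (ha : L.getLast? = some a) (hoe : oe ∈ L) (hv : B.ohead oe = v) :
    oe = a := by
  have hne : L ≠ [] := by intro hc; rw [hc] at ha; simp at ha
  have hL : L = L.dropLast ++ [a] := (List.dropLast_append_getLast? a ha).symm
  have hsplit : oe ∈ L.dropLast ∨ oe = a := by rw [hL] at hoe; simpa using hoe
  rcases hsplit with hmem | hmem
  · exfalso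
    have h2 : B.ohead oe ∈ (L.dropLast).map B.ohead := List.mem_map_of_mem hmem
    rw [List.map_dropLast] at h2
    rw [hv] at h2
    exact end_not_internal h he hne h2
  · exact hmem

end BidirGraph
namespace BidirGraph

variable {V E : Type} {B : BidirGraph V E} {r x v : V} {L M : List (E × Bool)}

lemma ohead_eq_of_shared
    (hL : B.IsPathFrom r L) (hM : B.IsPathFrom r M) (hneM : M ≠ [])
    (hshare : ∀ w ∈ L.map B.ohead, w ∈ M.map B.ohead → w = v)
    {oeL oeM : E × Bool} (hoeL : oeL ∈ L) (hoeM : oeM ∈ M) (heq : oeL.1 = oeM.1) :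
    B.ohead oeL = v := by
  have hLheads : B.ohead oeL ∈ L.map B.ohead := List.mem_map_of_mem hoeL
  have hcases : B.ohead oeL = B.ohead oeM ∨ B.ohead oeL = B.otail oeM := by
    rcases B.endpoints_pair oeL with ⟨h1, h2⟩ | ⟨h1, h2⟩ <;>
      rcases B.endpoints_pair oeM with ⟨h3, h4⟩ | ⟨h3, h4⟩ <;>
      rw [heq] at h1 h2
    · left; rw [← h2, ← h4]
    · right; rw [← h2, ← h4]
    · right; rw [← h1, ← h3]
    · left; rw [← h1, ← h3]
  rcases hcases with hc | hc
  · exact hshare _ hLheads (hc ▸ List.mem_map_of_mem hoeM)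
  · have := (edge_endpoint_mem hM.1 hneM hoeM).1
    rw [← hc] at this
    rcases List.mem_cons.mp this with h | h
    · exact absurd (h ▸ hLheads) hL.start_not_mem
    · exact hshare _ hLheads ((internal_sublist B M).mem h)

/-- The key consequence of cleanness: two `r`-paths meeting for the first time at `v`
   arrive at `v` with the same sign. -/
lemma sign_eq_at_meet (hclean : B.Clean r)
    (hL : B.IsPathFrom r L) (hLe : B.trailEnd r L = v)
    (hM : B.IsPathFrom r M) (hMe : B.trailEnd r M = v)
    (hv : v ≠ r)
    (hshare : ∀ w ∈ L.map B.ohead, w ∈ M.map B.ohead → w = v)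
    {a b : E × Bool} (ha : L.getLast? = some a) (hb : M.getLast? = some b) :
    B.sign a.1 v = B.sign b.1 v := by
  have hneL : L ≠ [] := trailEnd_ne_start hLe hv
  have hneM : M ≠ [] := trailEnd_ne_start hMe hv
  have hshare' : ∀ w ∈ M.map B.ohead, w ∈ L.map B.ohead → w = v := fun w h1 h2 => hshare w h2 h1
  have hheada : B.ohead a = v := by rw [trailEnd, ha] at hLe; exact hLe
  have hheadb : B.ohead b = v := by rw [trailEnd, hb] at hMe; exact hMe
  by_contra hsign
  by_cases hE : ∃ e, e ∈ L.map Prod.fst ∧ e ∈ M.map Prod.fst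
  · obtain ⟨e, heL, heM⟩ := hE
    obtain ⟨oeL, hoeL, hoeL1⟩ := List.mem_map.mp heL
    obtain ⟨oeM, hoeM, hoeM1⟩ := List.mem_map.mp heM
    have hvL : B.ohead oeL = v :=
      ohead_eq_of_shared hL hM hneM hshare hoeL hoeM (by rw [hoeL1, hoeM1])
    have hvM : B.ohead oeM = v :=
      ohead_eq_of_shared hM hL hneL hshare' hoeM hoeL (by rw [hoeL1, hoeM1])
    have haa : oeL = a := eq_last_of_ohead_end hL hLe ha hoeL hvL
    have hbb : oeM = b := eq_last_of_ohead_end hM hMe hb hoeM hvM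
    apply hsign
    rw [← haa, ← hbb, hoeL1, hoeM1]
  · push_neg at hE
    -- Build the almost path L ++ trev M and contradict cleanness.
    set N := L ++ trev M with hN
    have hMv : B.IsTrailFrom v (trev M) := by
      have h0 := hM.1.trev_trail
      rw [hMe] at h0
      exact h0
    have htrail : B.IsTrailFrom r N := by
      refine hL.1.append hMv hneL ?_ ?_
      · intro a' ha' b' hb'
        rw [ha] at ha'
        cases ha'
        rw [head?_trev, hb] at hb'
        simp only [Option.map_some] at hb'
        cases hb'
        refine ⟨?_, ?_⟩
        · rw [hheada, otail_oflip, hheadb]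
        · rw [hheada]
          intro hc
          exact hsign (by simpa [oflip] using hc)
      · intro e heL heM
        rw [map_fst_trev, List.mem_reverse] at heM
        exact hE e heL heM
    have hInt : B.Internal N = (B.Internal L ++ [v]) ++ (B.Internal M).reverse := by
      have hmapN : N.map B.ohead =
          ((B.Internal L ++ [v]) ++ (B.Internal M).reverse) ++ [r] := by
        rw [hN, List.map_append, map_ohead_eq (v := r) hneL, hLe, map_ohead_trev,
          map_otail_path hM.1 hneM, List.reverse_cons]
        simp [List.append_assoc]
      rw [Internal, hmapN, List.dropLast_concat]
    have hIL : (B.Internal L).Nodup := hL.headsNodup.sublist (internal_sublist B L)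
    have hIM : (B.Internal M).Nodup := hM.headsNodup.sublist (internal_sublist B M)
    have hvIL : v ∉ B.Internal L := end_not_internal hL hLe hneL
    have hvIM : v ∉ B.Internal M := end_not_internal hM hMe hneM
    have hrIL : r ∉ B.Internal L := fun hc => (internal_ne_start hL hc) rfl
    have hrIM : r ∉ B.Internal M := fun hc => (internal_ne_start hM hc) rfl
    have hILM : ∀ w ∈ B.Internal L, w ∈ B.Internal M → False := by
      intro w h1 h2
      have := hshare w ((internal_sublist B L).mem h1) ((internal_sublist B M).mem h2)
      rw [this] at h1
      exact hvIL h1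
    have hnodup : (r :: B.Internal N).Nodup := by
      rw [hInt]
      refine List.nodup_cons.mpr ⟨?_, ?_⟩
      · intro hc
        rcases List.mem_append.mp hc with hc | hc
        · rcases List.mem_append.mp hc with hc | hc
          · exact hrIL hc
          · simp at hc; exact hv hc.symm
        · exact hrIM (List.mem_reverse.mp hc)
      · refine List.nodup_append.mpr ⟨?_, List.nodup_reverse.mpr hIM, ?_⟩
        · refine List.nodup_append.mpr ⟨hIL, List.nodup_singleton v, ?_⟩
          intro w h1 w' h2 hww
          subst hww
          simp at h2
          rw [h2] at h1
          exact hvIL h1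
        · intro w h1 w' h2 hww
          subst hww
          rw [List.mem_reverse] at h2
          rcases List.mem_append.mp h1 with h1 | h1
          · exact hILM w h1 h2
          · simp at h1
            rw [h1] at h2
            exact hvIM h2
    have hend : B.trailEnd r N = r := by
      have htne : trev M ≠ [] := trev_ne_nil hneM
      have h0 : M.head? = some (M.head hneM) := List.head?_eq_head _
      unfold trailEnd
      rw [hN, List.getLast?_append_of_ne_nil _ htne, getLast?_trev, h0]
      simp only [Option.map_some]
      rw [ohead_oflip]
      exact hM.1.2.1 _ h0
    exact hclean ⟨N, by simp [hN, hneL], ⟨htrail, hnodup⟩, hend⟩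

end BidirGraph
namespace BidirGraph

variable {V E : Type} {B : BidirGraph V E} {r x : V} {L M : List (E × Bool)}

lemma ends_match {oe1 oe2 : E × Bool} (heq : oe1.1 = oe2.1) :
    (B.ohead oe1 = B.ohead oe2 ∨ B.ohead oe1 = B.otail oe2) ∧
    (B.otail oe1 = B.ohead oe2 ∨ B.otail oe1 = B.otail oe2) := by
  rcases B.endpoints_pair oe1 with ⟨h1, h2⟩ | ⟨h1, h2⟩ <;>
    rcases B.endpoints_pair oe2 with ⟨h3, h4⟩ | ⟨h3, h4⟩ <;>
    rw [heq] at h1 h2 <;>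
    constructor
  · left; rw [← h2, ← h4]
  · right; rw [← h1, ← h3]
  · right; rw [← h2, ← h4]
  · left; rw [← h1, ← h3]
  · right; rw [← h1, ← h3]
  · left; rw [← h2, ← h4]
  · left; rw [← h1, ← h3]
  · right; rw [← h2, ← h4]

lemma mem_take_heads {q : ℕ} (hq : q < L.length) {w : V}
    (hw : w ∈ (L.take (q+1)).map B.ohead) :
    ∃ q', ∃ h' : q' ≤ q, w = B.ohead (L.get ⟨q', by omega⟩) := by
  obtain ⟨oe, hoe, rfl⟩ := List.mem_map.mp hw
  obtain ⟨i, hi, hoe'⟩ := List.mem_iff_getElem.mp hoe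
  rw [List.length_take] at hi
  have hiq : i ≤ q := by omega
  refine ⟨i, hiq, ?_⟩
  rw [← hoe', List.getElem_take]
  simp

/-- The splice of a prefix of `L` with a suffix of `M` at their first meeting vertex. -/
lemma splice (hclean : B.Clean r) (hxr : x ≠ r)
    (hL : B.IsPathFrom r L) (hLx : B.trailEnd r L = x)
    (hM : B.IsPathFrom r M) (hMx : B.trailEnd r M = x)
    {q p : ℕ} (hq : q < L.length) (hp : p + 1 < M.length)
    (hveq : B.ohead (L.get ⟨q, hq⟩) = B.ohead (M.get ⟨p, by omega⟩))
    (hearlier : ∀ q', ∀ h' : q' < q, B.ohead (L.get ⟨q', by omega⟩) ∉ M.map B.ohead) :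
    B.IsPathFrom r (L.take (q+1) ++ M.drop (p+1)) ∧
    B.trailEnd r (L.take (q+1) ++ M.drop (p+1)) = x ∧
    (L.take (q+1) ++ M.drop (p+1)).head? = L.head? ∧
    (L.take (q+1) ++ M.drop (p+1)).getLast? = M.getLast? ∧
    (∀ w ∈ B.Internal (L.take (q+1) ++ M.drop (p+1)),
      w = B.ohead (L.get ⟨q, hq⟩) ∨
      (∃ q', ∃ h' : q' < q, w = B.ohead (L.get ⟨q', by omega⟩)) ∨ w ∈ B.Internal M) := by
  have hneM : M ≠ [] := trailEnd_ne_start hMx hxr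
  have hneL : L ≠ [] := trailEnd_ne_start hLx hxr
  set v := B.ohead (L.get ⟨q, hq⟩) with hv
  set A := L.take (q+1) with hA
  set D := M.drop (p+1) with hD
  have hneA : A ≠ [] := by
    refine List.ne_nil_of_length_pos ?_
    rw [hA, List.length_take]
    omega
  have hneD : D ≠ [] := by
    refine List.ne_nil_of_length_pos ?_
    rw [hD, List.length_drop]
    omega
  -- v is internal to M
  have hvInt : v ∈ B.Internal M := by
    have hlen : p < (B.Internal M).length := by
      unfold Internal
      rw [List.length_dropLast, List.length_map]
      omega
    have : (B.Internal M).get ⟨p, hlen⟩ = v := by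
      unfold Internal
      simp only [List.get_eq_getElem, List.getElem_dropLast, List.getElem_map]
      rw [hveq]
      simp
    rw [← this]
    exact List.get_mem _ _
  have hvhM : v ∈ M.map B.ohead := (internal_sublist B M).mem hvInt
  have hvx : v ≠ x := fun hc => end_not_internal hM hMx hneM (hc ▸ hvInt)
  have hvr : v ≠ r := internal_ne_start hM hvInt
  -- A is a path from r ending at v
  have hApath : B.IsPathFrom r A := by
    refine ⟨hL.1.take _, ?_⟩
    have hsub : List.Sublist (r :: A.map B.ohead) (r :: L.map B.ohead) := by
      refine List.Sublist.cons₂ r ?_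
      rw [hA]
      exact (L.take_sublist (q+1)).map _
    exact hL.2.sublist hsub
  have hAend : B.trailEnd r A = v := trailEnd_take hq
  have hAlast : A.getLast? = some (L.get ⟨q, hq⟩) := getLast?_take hq
  -- heads of A are not on M except v
  have hAheads : ∀ w ∈ A.map B.ohead, w ∈ M.map B.ohead → w = v := by
    intro w hwA hwM
    obtain ⟨q', hq', hw⟩ := mem_take_heads hq hwA
    rcases Nat.lt_or_ge q' q with h' | h'
    · exact absurd hwM (hw ▸ hearlier q' h')
    · have : q' = q := by omega
      subst this
      rw [hw]
  -- the C = M.take (p+1) path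
  have hCpath : B.IsPathFrom r (M.take (p+1)) := by
    refine ⟨hM.1.take _, ?_⟩
    have hsub : List.Sublist (r :: (M.take (p+1)).map B.ohead) (r :: M.map B.ohead) := by
      refine List.Sublist.cons₂ r ?_
      exact (M.take_sublist (p+1)).map _
    exact hM.2.sublist hsub
  have hpM : p < M.length := by omega
  have hCend : B.trailEnd r (M.take (p+1)) = v := by
    rw [trailEnd_take hpM, ← hveq]
  have hClast : (M.take (p+1)).getLast? = some (M.get ⟨p, hpM⟩) := getLast?_take hpM
  -- sign equality at v
  have hsign : B.sign (L.get ⟨q, hq⟩).1 v = B.sign (M.get ⟨p, hpM⟩).1 v := by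
    refine sign_eq_at_meet hclean hApath hAend hCpath hCend hvr ?_ hAlast hClast
    intro w hwA hwC
    exact hAheads w hwA (((M.take_sublist (p+1)).map _).mem hwC)
  -- junction step
  have hchainM := hM.1.2.2
  have hstep : B.TStep (M.get ⟨p, hpM⟩) (M.get ⟨p+1, hp⟩) := chain'_get hchainM hp
  have hheadD : D.head? = some (M.get ⟨p+1, hp⟩) := by
    rw [hD, List.head?_drop, List.getElem?_eq_getElem hp]
    simp
  have hjunction : B.TStep (L.get ⟨q, hq⟩) (M.get ⟨p+1, hp⟩) := by
    have h2 := hstep.2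
    rw [← hveq] at h2
    constructor
    · rw [← hv, hveq]
      exact hstep.1
    · rw [← hv, hsign]
      exact h2
  -- D is a trail from v
  have hDtrail : B.IsTrailFrom v D := by
    have := hM.1.drop hpM
    rw [← hveq] at this
    exact this
  -- vertex sets of A and D intersect only in v
  have hrD : r ∉ D.map B.ohead := by
    intro hc
    rw [hD] at hc
    exact hM.start_not_mem (((M.drop_sublist (p+1)).map _).mem hc)
  have hDsubM : ∀ w ∈ D.map B.ohead, w ∈ M.map B.ohead := by
    intro w hc
    rw [hD] at hc
    exact ((M.drop_sublist (p+1)).map _).mem hc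
  have hvD : v ∉ D.map B.ohead := by
    intro hc
    rw [hD, List.map_drop] at hc
    have hvtake : v ∈ (M.map B.ohead).take (p+1) := by
      rw [← List.map_take]
      refine List.mem_map.mpr ⟨M.get ⟨p, hpM⟩, ?_, hveq.symm⟩
      exact List.mem_of_mem_getLast? (by rw [getLast?_take hpM]; rfl)
    have hnd := hM.headsNodup
    rw [← List.take_append_drop (p+1) (M.map B.ohead), List.nodup_append] at hnd
    exact hnd.2.2 v hvtake v hc rfl
  have hmeet : ∀ w, w ∈ r :: A.map B.ohead → w ∈ v :: D.map B.ohead → w = v := by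
    intro w hwA hwD
    rcases List.mem_cons.mp hwD with h | h
    · exact h
    rcases List.mem_cons.mp hwA with h' | h'
    · exact absurd (h' ▸ h) hrD
    · exact hAheads w h' (hDsubM w h)
  -- edge disjointness of A and D
  have hedge : ∀ e ∈ A.map Prod.fst, e ∉ D.map Prod.fst := by
    intro e heA heD
    obtain ⟨oeA, hoeA, hA1⟩ := List.mem_map.mp heA
    obtain ⟨oeD, hoeD, hD1⟩ := List.mem_map.mp heD
    have hm := ends_match (B := B) (oe1 := oeA) (oe2 := oeD) (by rw [hA1, hD1])
    have heA1 := edge_endpoint_mem hApath.1 hneA hoeA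
    have heD1 := edge_endpoint_mem hDtrail hneD hoeD
    have hoA : B.ohead oeA ∈ r :: A.map B.ohead := List.mem_cons_of_mem _ heA1.2
    have htA : B.otail oeA ∈ r :: A.map B.ohead := by
      rcases List.mem_cons.mp heA1.1 with h | h
      · exact h ▸ List.mem_cons_self
      · exact List.mem_cons_of_mem _ ((internal_sublist B A).mem h)
    have hoD : B.ohead oeD ∈ v :: D.map B.ohead := List.mem_cons_of_mem _ heD1.2
    have htD : B.otail oeD ∈ v :: D.map B.ohead := by
      rcases List.mem_cons.mp heD1.1 with h | h
      · exact h ▸ List.mem_cons_self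
      · exact List.mem_cons_of_mem _ ((internal_sublist B D).mem h)
    have h1 : B.ohead oeA = v := by
      rcases hm.1 with h | h
      · exact hmeet _ hoA (h ▸ hoD)
      · exact hmeet _ hoA (h ▸ htD)
    have h2 : B.otail oeA = v := by
      rcases hm.2 with h | h
      · exact hmeet _ htA (h ▸ hoD)
      · exact hmeet _ htA (h ▸ htD)
    exact B.ohead_ne_otail oeA (h1.trans h2.symm)
  -- the spliced trail
  have htrail : B.IsTrailFrom r (A ++ D) := by
    refine hApath.1.append hDtrail hneA ?_ hedge
    intro a' ha' b' hb'
    rw [hAlast] at ha'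
    cases ha'
    rw [hheadD] at hb'
    cases hb'
    exact hjunction
  -- head and last
  have hhead : (A ++ D).head? = L.head? := by
    rw [List.head?_append_of_ne_nil _ hneA]
    cases hLh : A.head? with
    | none => rw [List.head?_eq_none_iff] at hLh; exact absurd hLh hneA
    | some a0 => exact (head?_take (by rw [← hA]; exact hLh)).symm
  have hlast : (A ++ D).getLast? = M.getLast? := by
    rw [List.getLast?_append_of_ne_nil _ hneD, hD]
    conv_rhs => rw [← List.take_append_drop (p+1) M]
    rw [List.getLast?_append_of_ne_nil _ hneD]
  -- vertex nodup
  have hnodupAD : (r :: (A ++ D).map B.ohead).Nodup := by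
    rw [List.map_append]
    refine List.nodup_cons.mpr ⟨?_, ?_⟩
    · intro hc
      rcases List.mem_append.mp hc with h | h
      · exact hApath.start_not_mem h
      · exact hrD h
    · refine List.nodup_append.mpr ⟨hApath.headsNodup, ?_, ?_⟩
      · rw [hD]
        exact hM.headsNodup.sublist ((M.drop_sublist (p+1)).map _)
      · intro w h1 w' h2 hww
        subst hww
        have := hAheads w h1 (hDsubM w h2)
        rw [this] at h2
        exact hvD h2
  have hpath : B.IsPathFrom r (A ++ D) := ⟨htrail, hnodupAD⟩
  have hend : B.trailEnd r (A ++ D) = x := by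
    unfold trailEnd
    rw [hlast]
    unfold trailEnd at hMx
    exact hMx
  refine ⟨hpath, hend, hhead, hlast, ?_⟩
  -- internal description
  intro w hw
  have hwheads : w ∈ (A ++ D).map B.ohead := (internal_sublist B _).mem hw
  have hwx : w ≠ x := by
    intro hc
    exact end_not_internal hpath hend (fun hcc => hneA (List.append_eq_nil_iff.mp hcc).1) (hc ▸ hw)
  rw [List.map_append, List.mem_append] at hwheads
  rcases hwheads with h | h
  · obtain ⟨q', hq', hwq⟩ := mem_take_heads hq h
    rcases Nat.lt_or_ge q' q with h' | h'
    · exact Or.inr (Or.inl ⟨q', h', hwq⟩)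
    · have : q' = q := by omega
      subst this
      exact Or.inl hwq
  · exact Or.inr (Or.inr (mem_internal_of_ne_end hM hMx hneM (hDsubM w h) hwx))

end BidirGraph
namespace BidirGraph

variable {V E : Type} {B : BidirGraph V E} {r x : V} {L : List (E × Bool)}

attribute [local instance] Classical.propDecidable

lemma mem_heads_index {w : V} (hw : w ∈ L.map B.ohead) :
    ∃ q, ∃ hq : q < L.length, w = B.ohead (L.get ⟨q, hq⟩) := by
  obtain ⟨oe, hoe, rfl⟩ := List.mem_map.mp hw
  obtain ⟨q, hq, h⟩ := List.mem_iff_getElem.mp hoe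
  exact ⟨q, hq, by rw [← h]; simp⟩

lemma mem_internal_index {w : V} (hw : w ∈ B.Internal L) :
    ∃ q, ∃ hq : q + 1 < L.length, w = B.ohead (L.get ⟨q, by omega⟩) := by
  unfold Internal at hw
  obtain ⟨q, hq, h⟩ := List.mem_iff_getElem.mp hw
  rw [List.length_dropLast, List.length_map] at hq
  refine ⟨q, by omega, ?_⟩
  rw [← h, List.getElem_dropLast, List.getElem_map]
  simp

lemma internal_index_mem {q : ℕ} (hq : q + 1 < L.length) :
    B.ohead (L.get ⟨q, by omega⟩) ∈ B.Internal L := by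
  unfold Internal
  have hq' : q < (L.map B.ohead).dropLast.length := by
    rw [List.length_dropLast, List.length_map]; omega
  have : (L.map B.ohead).dropLast[q]'hq' = B.ohead (L.get ⟨q, by omega⟩) := by
    rw [List.getElem_dropLast, List.getElem_map]
    simp
  rw [← this]
  exact List.getElem_mem _

lemma head?_take_pos {α : Type} {n : ℕ} (hn : 0 < n) (L : List α) :
    (L.take n).head? = L.head? := by
  cases L with
  | nil => simp
  | cons a l =>
    cases n with
    | zero => omega
    | succ k => simp

lemma trailEnd_eq_get {v : V} (hne : L ≠ []) :
    B.trailEnd v L = B.ohead (L.get ⟨L.length - 1, by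
      cases L with
      | nil => exact absurd rfl hne
      | cons a l => simp⟩) := by
  unfold trailEnd
  rw [List.getLast?_eq_getLast hne]
  congr 1
  rw [List.getLast_eq_getElem]
  simp

lemma get_congr {α : Type} (l : List α) {a b : ℕ} (ha : a < l.length) (hb : b < l.length)
    (h : a = b) : l.get ⟨a, ha⟩ = l.get ⟨b, hb⟩ := by subst h; rfl

noncomputable def uncovCard (B : BidirGraph V E) {m : ℕ} (P : Fin m → List (E × Bool))
    (Rs : List (List (E × Bool) × ℕ)) : ℕ :=
  (Finset.univ.filter (fun i : Fin m =>
    ¬ ∃ p ∈ Rs, p.1.head? = (P i).head?)).card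

lemma uncovCard_le (B : BidirGraph V E) {m : ℕ} (P : Fin m → List (E × Bool))
    (Rs : List (List (E × Bool) × ℕ)) : B.uncovCard P Rs ≤ m := by
  refine (Finset.card_filter_le _ _).trans ?_
  rw [Finset.card_univ, Fintype.card_fin]

lemma uncovCard_lt (B : BidirGraph V E) {m : ℕ} (P : Fin m → List (E × Bool))
    {Rs Rs' : List (List (E × Bool) × ℕ)}
    (hsub : ∀ p ∈ Rs, p ∈ Rs') (i : Fin m)
    (hold : ¬ ∃ p ∈ Rs, p.1.head? = (P i).head?)
    (hnew : ∃ p ∈ Rs', p.1.head? = (P i).head?) :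
    B.uncovCard P Rs' < B.uncovCard P Rs := by
  unfold uncovCard
  have h1 : (Finset.univ.filter (fun j : Fin m =>
      ¬ ∃ p ∈ Rs', p.1.head? = (P j).head?)) ⊂
      (Finset.univ.filter (fun j : Fin m =>
      ¬ ∃ p ∈ Rs, p.1.head? = (P j).head?)) := by
    constructor
    · intro j hj
      rw [Finset.mem_filter] at hj ⊢
      refine ⟨Finset.mem_univ _, ?_⟩
      intro ⟨p, hp, hph⟩
      exact hj.2 ⟨p, hsub p hp, hph⟩
    · intro hc
      have := hc (Finset.mem_filter.mpr ⟨Finset.mem_univ i, hold⟩)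
      rw [Finset.mem_filter] at this
      exact this.2 hnew
  exact Finset.card_lt_card h1
end BidirGraph
namespace BidirGraph

variable {V E : Type} {B : BidirGraph V E} {r x : V}

attribute [local instance] Classical.propDecidable

lemma pym_rec {m : ℕ} {P : Fin m → List (E × Bool)}
    (hclean : B.Clean r) (hxr : x ≠ r)
    (hP : ∀ i, B.IsPathFrom r (P i) ∧ B.trailEnd r (P i) = x)
    (hPdisj : ∀ i j, i ≠ j → B.IntDisj (P i) (P j)) :
    ∀ (μ : ℕ) (Rs : List (List (E × Bool) × ℕ)),
      (∀ p ∈ Rs, B.IsPathFrom r p.1 ∧ B.trailEnd r p.1 = x) →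
      List.Pairwise (fun a b => B.IntDisj a.1 b.1) Rs →
      (∀ p ∈ Rs, p.2 ≤ p.1.length ∧
        (p.1.length - p.2 = 0 ∨
          ∃ i t, 1 ≤ t ∧ p.1.take (p.1.length - p.2) = (P i).take t)) →
      (m + 1) * (Rs.map Prod.snd).sum + B.uncovCard P Rs ≤ μ →
      ∃ Rs' : List (List (E × Bool)),
        (∀ L ∈ Rs', B.IsPathFrom r L ∧ B.trailEnd r L = x) ∧
        List.Pairwise B.IntDisj Rs' ∧
        (∀ i : Fin m, ∃ L ∈ Rs', L.head? = (P i).head?) ∧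
        (∀ p ∈ Rs, ∃ L ∈ Rs', L.getLast? = p.1.getLast?) := by
  intro μ
  induction μ using Nat.strong_induction_on with
  | _ μ IH =>
  intro Rs hpaths hdisj hstruct hmeas
  by_cases hall : ∀ i : Fin m, ∃ p ∈ Rs, p.1.head? = (P i).head?
  · refine ⟨Rs.map Prod.fst, ?_, ?_, ?_, ?_⟩
    · intro L hL
      obtain ⟨p, hp, rfl⟩ := List.mem_map.mp hL
      exact hpaths p hp
    · exact List.Pairwise.map _ (fun a b h => h) hdisj
    · intro i
      obtain ⟨p, hp, h⟩ := hall i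
      exact ⟨p.1, List.mem_map_of_mem hp, h⟩
    · intro p hp
      exact ⟨p.1, List.mem_map_of_mem hp, rfl⟩
  · push_neg at hall
    obtain ⟨i, hi⟩ := hall
    have hPi := hP i
    have hPine : P i ≠ [] := trailEnd_ne_start hPi.2 hxr
    by_cases hhit : ∃ q, ∃ hq : q < (P i).length,
        ∃ p ∈ Rs, B.ohead ((P i).get ⟨q, hq⟩) ∈ B.Internal p.1
    · -- REPLACEMENT CASE
      have hex := hhit
      set q := Nat.find hex with hqdef
      obtain ⟨hq, p0, hp0mem, hp0int⟩ := Nat.find_spec hex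
      have hqmin : ∀ q' < q, ¬ ∃ hq' : q' < (P i).length,
          ∃ p ∈ Rs, B.ohead ((P i).get ⟨q', hq'⟩) ∈ B.Internal p.1 :=
        fun q' h => Nat.find_min hex h
      have hp0path := (hpaths p0 hp0mem).1
      have hp0end := (hpaths p0 hp0mem).2
      have hp0ne : p0.1 ≠ [] := trailEnd_ne_start hp0end hxr
      have hvx : B.ohead ((P i).get ⟨q, hq⟩) ≠ x :=
        fun hce => end_not_internal hp0path hp0end hp0ne (hce ▸ hp0int)
      have hq1 : q + 1 < (P i).length := by
        rcases Nat.lt_or_ge (q + 1) (P i).length with h | h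
        · exact h
        · exfalso
          apply hvx
          have htE := trailEnd_eq_get (B := B) (v := r) hPine
          rw [hPi.2] at htE
          rw [htE]
          exact congrArg B.ohead (get_congr _ _ _ (by omega))
      obtain ⟨pp, hpp, hveq⟩ := mem_internal_index hp0int
      have hearlier : ∀ q', ∀ h' : q' < q,
          B.ohead ((P i).get ⟨q', by omega⟩) ∉ p0.1.map B.ohead := by
        intro q' h' hc
        have hwInt : B.ohead ((P i).get ⟨q', by omega⟩) ∈ B.Internal (P i) :=
          internal_index_mem (by omega)
        have hwx : B.ohead ((P i).get ⟨q', by omega⟩) ≠ x :=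
          fun hce => end_not_internal hPi.1 hPi.2 hPine (hce ▸ hwInt)
        have hwi : B.ohead ((P i).get ⟨q', by omega⟩) ∈ B.Internal p0.1 :=
          mem_internal_of_ne_end hp0path hp0end hp0ne hc hwx
        exact hqmin q' h' ⟨by omega, p0, hp0mem, hwi⟩
      obtain ⟨hNPpath, hNPend, hNPhead, hNPlast, hNPint⟩ :=
        splice hclean hxr hPi.1 hPi.2 hp0path hp0end hq hpp hveq hearlier
      set NP := (P i).take (q + 1) ++ p0.1.drop (pp + 1) with hNP
      set c' := p0.1.length - (pp + 1) with hc'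
      obtain ⟨l1, l2, hRs⟩ := List.append_of_mem hp0mem
      set Rs' := l1 ++ (NP, c') :: l2 with hRs'
      have hmemRs : ∀ p1, (p1 ∈ l1 ∨ p1 ∈ l2) → p1 ∈ Rs := by
        intro p1 h
        rw [hRs]
        rcases h with h | h
        · exact List.mem_append_left _ h
        · exact List.mem_append_right _ (List.mem_cons_of_mem _ h)
      have hdisjD : List.Pairwise (fun a b => B.IntDisj a.1 b.1) (l1 ++ p0 :: l2) := by
        rw [← hRs]; exact hdisj
      rw [List.pairwise_append] at hdisjD
      have hd1 := hdisjD.1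
      have hd2 := List.pairwise_cons.mp hdisjD.2.1
      have hcross := hdisjD.2.2
      have hp0disj : ∀ p1, (p1 ∈ l1 ∨ p1 ∈ l2) → ∀ w,
          w ∈ B.Internal p0.1 → w ∈ B.Internal p1.1 → False := by
        intro p1 hp1 w hw hw1
        rcases hp1 with h | h
        · exact hcross p1 h p0 (List.mem_cons_self) w hw1 hw
        · exact hd2.1 p1 h w hw hw1
      have hothers : ∀ p1, (p1 ∈ l1 ∨ p1 ∈ l2) → ∀ w,
          w ∈ B.Internal NP → w ∈ B.Internal p1.1 → False := by
        intro p1 hp1 w hw hw1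
        rcases hNPint w hw with hwv | ⟨q', hq', hwq⟩ | hwM
        · exact hp0disj p1 hp1 w (hwv ▸ hp0int) hw1
        · exact hqmin q' hq' ⟨by omega, p1, hmemRs p1 hp1, hwq ▸ hw1⟩
        · exact hp0disj p1 hp1 w hwM hw1
      have hdisj' : List.Pairwise (fun a b => B.IntDisj a.1 b.1) Rs' := by
        rw [hRs', List.pairwise_append]
        refine ⟨hd1, List.pairwise_cons.mpr ⟨?_, hd2.2⟩, ?_⟩
        · intro b hb w hw hw1
          exact hothers b (Or.inr hb) w hw hw1
        · intro a ha b hb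
          rcases List.mem_cons.mp hb with hb | hb
          · subst hb
            intro w hwa hwNP
            exact hothers a (Or.inl ha) w hwNP hwa
          · exact hcross a ha b (List.mem_cons_of_mem _ hb)
      have hmemRs' : ∀ p1, (p1 ∈ l1 ∨ p1 ∈ l2) → p1 ∈ Rs' := by
        intro p1 h
        rw [hRs']
        rcases h with h | h
        · exact List.mem_append_left _ h
        · exact List.mem_append_right _ (List.mem_cons_of_mem _ h)
      have hsplit' : ∀ p1 ∈ Rs', p1 = (NP, c') ∨ (p1 ∈ l1 ∨ p1 ∈ l2) := by
        intro p1 h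
        rw [hRs'] at h
        rcases List.mem_append.mp h with h | h
        · exact Or.inr (Or.inl h)
        · rcases List.mem_cons.mp h with h | h
          · exact Or.inl h
          · exact Or.inr (Or.inr h)
      have hpaths' : ∀ p ∈ Rs', B.IsPathFrom r p.1 ∧ B.trailEnd r p.1 = x := by
        intro p hp
        rcases hsplit' p hp with h | h
        · rw [h]; exact ⟨hNPpath, hNPend⟩
        · exact hpaths p (hmemRs p h)
      have hlenNP : NP.length = (q + 1) + (p0.1.length - (pp + 1)) := by
        rw [hNP, List.length_append, List.length_take, List.length_drop]
        congr 1
        omega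
      have hstruct' : ∀ p ∈ Rs', p.2 ≤ p.1.length ∧
          (p.1.length - p.2 = 0 ∨
            ∃ i t, 1 ≤ t ∧ p.1.take (p.1.length - p.2) = (P i).take t) := by
        intro p hp
        rcases hsplit' p hp with h | h
        · subst h
          constructor
          · simp only [hlenNP]
            omega
          · right
            refine ⟨i, q + 1, by omega, ?_⟩
            have htot : NP.length - c' = q + 1 := by rw [hlenNP]; omega
            rw [htot]
            have hlenA : ((P i).take (q + 1)).length = q + 1 := by
              rw [List.length_take]; omega
            rw [hNP]
            exact List.take_left' hlenA
        · exact hstruct p (hmemRs p h)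
      -- measure decrease
      have hclt : c' + 1 ≤ p0.2 := by
        rcases Nat.lt_or_ge pp (p0.1.length - p0.2) with hlt | hge
        · exfalso
          obtain ⟨hcle, hstructp0⟩ := hstruct p0 hp0mem
          rcases hstructp0 with h0 | ⟨i', t, ht1, hpre⟩
          · omega
          · have hvpre : B.ohead ((P i).get ⟨q, hq⟩) ∈
                (p0.1.take (p0.1.length - p0.2)).map B.ohead := by
              refine List.mem_map.mpr ⟨p0.1.get ⟨pp, by omega⟩, ?_, hveq.symm⟩
              refine List.mem_iff_getElem.mpr ⟨pp, by rw [List.length_take]; omega, ?_⟩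
              rw [List.getElem_take]
              simp
            rw [hpre] at hvpre
            have hvPi' : B.ohead ((P i).get ⟨q, hq⟩) ∈ (P i').map B.ohead :=
              (((P i').take_sublist t).map _).mem hvpre
            by_cases hii : i' = i
            · subst hii
              refine hi p0 hp0mem ?_
              have h1 : (p0.1.take (p0.1.length - p0.2)).head? = p0.1.head? :=
                head?_take_pos (by omega) _
              have h2 : ((P i').take t).head? = (P i').head? :=
                head?_take_pos (by omega) _
              rw [← h1, hpre, h2]
            · have hvIntPi : B.ohead ((P i).get ⟨q, hq⟩) ∈ B.Internal (P i) :=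
                internal_index_mem hq1
              have hPi'ne : P i' ≠ [] := trailEnd_ne_start (hP i').2 hxr
              have hvIntPi' : B.ohead ((P i).get ⟨q, hq⟩) ∈ B.Internal (P i') :=
                mem_internal_of_ne_end (hP i').1 (hP i').2 hPi'ne hvPi' hvx
              exact hPdisj i' i hii _ hvIntPi' hvIntPi
        · have hcle := (hstruct p0 hp0mem).1
          omega
      have hsums : (Rs.map Prod.snd).sum + c' = (Rs'.map Prod.snd).sum + p0.2 := by
        rw [hRs, hRs']
        simp only [List.map_append, List.map_cons, List.sum_append, List.sum_cons]
        omega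
      have hμlt : (m + 1) * (Rs'.map Prod.snd).sum + B.uncovCard P Rs' < μ := by
        have hu' := uncovCard_le B P Rs'
        have hS : (Rs'.map Prod.snd).sum + 1 ≤ (Rs.map Prod.snd).sum := by omega
        have h2 : (m + 1) * ((Rs'.map Prod.snd).sum + 1) ≤
            (m + 1) * (Rs.map Prod.snd).sum := Nat.mul_le_mul_left _ hS
        rw [Nat.mul_add, Nat.mul_one] at h2
        omega
      obtain ⟨Rsf, hf1, hf2, hf3, hf4⟩ :=
        IH _ hμlt Rs' hpaths' hdisj' hstruct' (le_refl _)
      refine ⟨Rsf, hf1, hf2, hf3, ?_⟩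
      intro p hp
      rw [hRs] at hp
      rcases List.mem_append.mp hp with h | h
      · exact hf4 p (hmemRs' p (Or.inl h))
      · rcases List.mem_cons.mp h with h | h
        · subst h
          have hNPmem : (NP, c') ∈ Rs' := by
            rw [hRs']
            exact List.mem_append_right _ (List.mem_cons_self)
          obtain ⟨Lf, hLf, hLfl⟩ := hf4 (NP, c') hNPmem
          exact ⟨Lf, hLf, by rw [hLfl]; exact hNPlast⟩
        · exact hf4 p (hmemRs' p (Or.inr h))
    · -- ADDITION CASE
      push_neg at hhit
      set Rs' := ((P i), 0) :: Rs with hRs'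
      have hpaths' : ∀ p ∈ Rs', B.IsPathFrom r p.1 ∧ B.trailEnd r p.1 = x := by
        intro p hp
        rcases List.mem_cons.mp hp with h | h
        · rw [h]; exact hPi
        · exact hpaths p h
      have hdisj' : List.Pairwise (fun a b => B.IntDisj a.1 b.1) Rs' := by
        refine List.pairwise_cons.mpr ⟨?_, hdisj⟩
        intro p hp w hw hwp
        have hw' : w ∈ B.Internal (P i) := hw
        obtain ⟨q, hq, hwq⟩ := mem_internal_index hw'
        exact hhit q (by omega) p hp (hwq ▸ hwp)
      have hstruct' : ∀ p ∈ Rs', p.2 ≤ p.1.length ∧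
          (p.1.length - p.2 = 0 ∨
            ∃ i t, 1 ≤ t ∧ p.1.take (p.1.length - p.2) = (P i).take t) := by
        intro p hp
        rcases List.mem_cons.mp hp with h | h
        · rw [h]
          refine ⟨Nat.zero_le _, Or.inr ⟨i, (P i).length,
            List.length_pos_iff.mpr hPine, ?_⟩⟩
          rw [Nat.sub_zero]
        · exact hstruct p h
      have hucov : B.uncovCard P Rs' < B.uncovCard P Rs := by
        refine uncovCard_lt B P (fun p hp => List.mem_cons_of_mem _ hp) i ?_ ?_
        · intro ⟨p, hp, hph⟩
          exact hi p hp hph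
        · exact ⟨((P i), 0), List.mem_cons_self, rfl⟩
      have hsums : (Rs'.map Prod.snd).sum = (Rs.map Prod.snd).sum := by
        rw [hRs']
        simp
      have hμlt : (m + 1) * (Rs'.map Prod.snd).sum + B.uncovCard P Rs' < μ := by
        rw [hsums]
        omega
      obtain ⟨Rsf, hf1, hf2, hf3, hf4⟩ :=
        IH _ hμlt Rs' hpaths' hdisj' hstruct' (le_refl _)
      exact ⟨Rsf, hf1, hf2, hf3, fun p hp => hf4 p (List.mem_cons_of_mem _ hp)⟩

end BidirGraph
open BidirGraph in
/-- Pym's theorem for internally vertex-disjoint paths in clean bidirected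
graphs: given families `P`, `Q` of pairwise internally vertex-disjoint `r`–`x` paths,
there is such a family `R` covering all first edges of `P` and all last edges of `Q`. -/
theorem stmt19 {V E : Type} (B : BidirGraph V E) (r : V)
    (hclean : B.Clean r) (x : V) (hx : x ≠ r)
    (m k : ℕ) (P : Fin m → List (E × Bool)) (Q : Fin k → List (E × Bool))
    (hP : ∀ i, B.IsPathFrom r (P i) ∧ B.trailEnd r (P i) = x)
    (hPdisj : ∀ i j, i ≠ j → B.IntDisj (P i) (P j))
    (hQ : ∀ i, B.IsPathFrom r (Q i) ∧ B.trailEnd r (Q i) = x)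
    (hQdisj : ∀ i j, i ≠ j → B.IntDisj (Q i) (Q j)) :
    ∃ (n : ℕ) (R : Fin n → List (E × Bool)),
      (∀ i, B.IsPathFrom r (R i) ∧ B.trailEnd r (R i) = x) ∧
      (∀ i j, i ≠ j → B.IntDisj (R i) (R j)) ∧
      (∀ i, ∀ oe ∈ (P i).head?, ∃ j, (R j).head? = some oe) ∧
      (∀ i, ∀ oe ∈ (Q i).getLast?, ∃ j, (R j).getLast? = some oe) := by
  classical
  set Rs0 : List (List (E × Bool) × ℕ) := (List.ofFn Q).map (fun L => (L, L.length)) with hRs0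
  have hpaths0 : ∀ p ∈ Rs0, B.IsPathFrom r p.1 ∧ B.trailEnd r p.1 = x := by
    intro p hp
    rw [hRs0] at hp
    obtain ⟨L, hL, rfl⟩ := List.mem_map.mp hp
    obtain ⟨j, rfl⟩ := List.mem_ofFn.mp hL
    exact hQ j
  have hdisj0 : List.Pairwise (fun a b => B.IntDisj a.1 b.1) Rs0 := by
    rw [hRs0]
    refine List.Pairwise.map _ (fun a b h => h) ?_
    refine List.pairwise_ofFn.mpr ?_
    intro i j hij
    exact hQdisj i j (Fin.ne_of_lt hij)
  have hstruct0 : ∀ p ∈ Rs0, p.2 ≤ p.1.length ∧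
      (p.1.length - p.2 = 0 ∨
        ∃ i t, 1 ≤ t ∧ p.1.take (p.1.length - p.2) = (P i).take t) := by
    intro p hp
    rw [hRs0] at hp
    obtain ⟨L, hL, rfl⟩ := List.mem_map.mp hp
    exact ⟨le_refl _, Or.inl (Nat.sub_self _)⟩
  obtain ⟨Rs', h1, h2, h3, h4⟩ :=
    pym_rec hclean hx hP hPdisj
      ((m + 1) * (Rs0.map Prod.snd).sum + B.uncovCard P Rs0) Rs0
      hpaths0 hdisj0 hstruct0 (le_refl _)
  refine ⟨Rs'.length, fun j => Rs'.get j, ?_, ?_, ?_, ?_⟩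
  · intro j
    exact h1 _ (List.get_mem _ _)
  · intro i j hij
    have hp := List.pairwise_iff_get.mp h2
    rcases lt_or_gt_of_ne hij with h | h
    · exact hp i j h
    · intro w hwi hwj
      exact hp j i h w hwj hwi
  · intro i oe hoe
    obtain ⟨L, hL, hLh⟩ := h3 i
    obtain ⟨n, hn⟩ := List.mem_iff_get.mp hL
    refine ⟨n, ?_⟩
    show (Rs'.get n).head? = some oe
    rw [hn, hLh]
    exact hoe
  · intro iq oe hoe
    have hmem : (Q iq, (Q iq).length) ∈ Rs0 := by
      rw [hRs0]
      exact List.mem_map_of_mem (List.mem_ofFn.mpr ⟨iq, rfl⟩)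
    obtain ⟨L, hL, hLl⟩ := h4 _ hmem
    obtain ⟨n, hn⟩ := List.mem_iff_get.mp hL
    refine ⟨n, ?_⟩
    show (Rs'.get n).getLast? = some oe
    rw [hn, hLl]
    exact hoe
end
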